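/- arXiv:2205.01535 — 5 statements merged into one kernel-verified Lean document; each statement's English description precedes it below -/
import Mathlib

section
/- Let A be an n×n Hermitian matrix with orthonormal eigenvectors q_1,...,q_n and eigenvalues λ_1,...,λ_n, and let u ∈ ℂⁿ with spectral coefficients w_j = ⟨q_j, u⟩. Then the Krylov matrix (u, Au, ..., A^{m-1}u) has rank m if and only if there exist at least m indices j with w_j ≠ 0 and pairwise distinct eigenvalues λ_j. -/
open Matrix Polynomial
open scoped ComplexOrder

/-- The rank of the "weighted Vandermonde" matrix `W j k = lam j ^ k * w j`
is `m` iff there is a subset of `m` indices with nonzero weights and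
pairwise distinct nodes. -/
theorem weighted_vandermonde_rank {n m : ℕ} (lam w : Fin n → ℂ) :
    (Matrix.of fun (j : Fin n) (k : Fin m) => lam j ^ (k : ℕ) * w j).rank = m ↔
      ∃ S : Finset (Fin n), m ≤ S.card ∧ (∀ j ∈ S, w j ≠ 0) ∧
        Set.InjOn lam ↑S := by
  classical
  set W : Matrix (Fin n) (Fin m) ℂ :=
    Matrix.of fun (j : Fin n) (k : Fin m) => lam j ^ (k : ℕ) * w j with hW
  constructor
  · -- rank = m → exists subset
    intro hrank
    set F : Finset (Fin n) := Finset.univ.filter fun j => w j ≠ 0 with hF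
    set D : Finset ℂ := F.image lam with hD
    -- factor W = X * Y with Y having D.card rows
    set X : Matrix (Fin n) D ℂ :=
      Matrix.of fun j (μ : D) => if lam j = (μ : ℂ) then w j else 0 with hX
    set Y : Matrix D (Fin m) ℂ :=
      Matrix.of fun (μ : D) (k : Fin m) => (μ : ℂ) ^ (k : ℕ) with hY
    have hfac : W = X * Y := by
      ext j k
      simp only [hW, hX, hY, Matrix.mul_apply, Matrix.of_apply]
      by_cases hwj : w j = 0
      · simp [hwj]
      · have hmem : lam j ∈ D := Finset.mem_image_of_mem lam (by simp [hF, hwj])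
        rw [Finset.sum_eq_single (⟨lam j, hmem⟩ : D)]
        · simp [mul_comm]
        · intro b _ hb
          have : lam j ≠ (b : ℂ) := by
            intro h; exact hb (by ext; exact h.symm)
          simp [this]
        · simp
    have hle : W.rank ≤ D.card := by
      calc W.rank = (X * Y).rank := by rw [hfac]
        _ ≤ Y.rank := Matrix.rank_mul_le_right X Y
        _ ≤ Fintype.card D := Matrix.rank_le_card_height Y
        _ = D.card := Fintype.card_coe D
    have hmD : m ≤ D.card := by rw [← hrank]; exact hle
    -- choose a representative in F for each value in D
    have hrep : ∀ μ : D, ∃ j, j ∈ F ∧ lam j = (μ : ℂ) := by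
      intro μ
      obtain ⟨j, hj, hj'⟩ := Finset.mem_image.mp μ.2
      exact ⟨j, hj, hj'⟩
    choose g hgF hglam using hrep
    have hginj : Function.Injective g := by
      intro a b hab
      have : (a : ℂ) = (b : ℂ) := by rw [← hglam a, ← hglam b, hab]
      exact Subtype.ext this
    refine ⟨Finset.univ.image g, ?_, ?_, ?_⟩
    · rw [Finset.card_image_of_injective _ hginj, Finset.card_univ, Fintype.card_coe]
      exact hmD
    · intro j hj
      obtain ⟨μ, _, rfl⟩ := Finset.mem_image.mp hj
      have := hgF μ
      simp only [hF, Finset.mem_filter] at this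
      exact this.2
    · intro a ha b hb hab
      simp only [Finset.coe_image, Set.mem_image] at ha hb
      obtain ⟨μa, _, rfl⟩ := ha
      obtain ⟨μb, _, rfl⟩ := hb
      rw [hglam, hglam] at hab
      exact congrArg g (Subtype.ext hab)
  · -- exists subset → rank = m
    rintro ⟨S, hScard, hSw, hSinj⟩
    obtain ⟨T, hTS, hTcard⟩ := Finset.exists_subset_card_eq hScard
    set e : Fin m ↪o Fin n := T.orderEmbOfFin hTcard with he
    have heT : ∀ k, e k ∈ T := fun k => T.orderEmbOfFin_mem hTcard k
    set P : Matrix (Fin m) (Fin n) ℂ :=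
      Matrix.of fun k j => if j = e k then 1 else 0 with hP
    have hPW : P * W =
        Matrix.diagonal (fun k => w (e k)) * Matrix.vandermonde (fun k => lam (e k)) := by
      ext k l
      rw [Matrix.mul_apply, Finset.sum_eq_single (e k)]
      · simp [hP, hW, Matrix.diagonal_mul, Matrix.vandermonde_apply, mul_comm]
      · intro b _ hb; simp [hP, hb]
      · simp
    have hinjT : ∀ a b : Fin m, lam (e a) = lam (e b) → a = b := by
      intro a b hab
      have := hSinj (hTS (heT a)) (hTS (heT b)) hab
      exact e.injective this
    have hdet : IsUnit (P * W).det := by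
      rw [hPW, Matrix.det_mul, Matrix.det_diagonal, Matrix.det_vandermonde]
      refine (IsUnit.mul ?_ ?_)
      · rw [isUnit_iff_ne_zero]
        exact Finset.prod_ne_zero_iff.mpr fun k _ => hSw _ (hTS (heT k))
      · rw [isUnit_iff_ne_zero]
        refine Finset.prod_ne_zero_iff.mpr fun i _ => ?_
        refine Finset.prod_ne_zero_iff.mpr fun j hj => ?_
        rw [Finset.mem_Ioi] at hj
        intro h
        rw [sub_eq_zero] at h
        exact hj.ne' (hinjT j i h)
    have hrankPW : (P * W).rank = m := by
      rw [Matrix.rank_of_isUnit _ ((Matrix.isUnit_iff_isUnit_det _).mpr hdet)]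
      simp
    refine le_antisymm (Matrix.rank_le_card_width W |>.trans (by simp)) ?_
    calc (m : ℕ) = (P * W).rank := hrankPW.symm
      _ ≤ W.rank := Matrix.rank_mul_le_right P W

theorem stmt_0 {n m : ℕ} (M A : Matrix (Fin n) (Fin n) ℂ)
    (hM : M.PosDef)
    (hA : ∀ x y : Fin n → ℂ, star (A *ᵥ x) ⬝ᵥ (M *ᵥ y) = star x ⬝ᵥ (M *ᵥ (A *ᵥ y)))
    (q : Fin n → (Fin n → ℂ)) (lam : Fin n → ℂ)
    (horth : ∀ i j : Fin n, star (q i) ⬝ᵥ (M *ᵥ q j) = if i = j then 1 else 0)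
    (heig : ∀ j, A *ᵥ q j = lam j • q j)
    (u : Fin n → ℂ) (w : Fin n → ℂ)
    (hw : ∀ j, w j = star (q j) ⬝ᵥ (M *ᵥ u)) :
    (Matrix.of fun i (k : Fin m) => ((A ^ (k : ℕ)) *ᵥ u) i).rank = m ↔
      ∃ S : Finset (Fin n), m ≤ S.card ∧ (∀ j ∈ S, w j ≠ 0) ∧
        Set.InjOn lam ↑S := by
  classical
  set Q : Matrix (Fin n) (Fin n) ℂ := Matrix.of fun i j => q j i with hQ
  -- orthonormality in matrix form
  have hQMQ : Qᴴ * M * Q = 1 := by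
    ext i j
    have := horth i j
    simp only [dotProduct, Pi.star_apply, Matrix.mulVec, dotProduct] at this
    simp only [Matrix.mul_apply, Matrix.conjTranspose_apply, hQ, Matrix.of_apply,
      Matrix.one_apply]
    rw [← this]
    simp only [Finset.sum_mul, Finset.mul_sum]
    rw [Finset.sum_comm]
    exact Finset.sum_congr rfl fun b _ => Finset.sum_congr rfl fun a _ => by ring
  have hdetQ : IsUnit Q.det := by
    have : (Qᴴ * M).det * Q.det = 1 := by
      rw [← Matrix.det_mul, hQMQ, Matrix.det_one]
    exact IsUnit.of_mul_eq_one _ (by rw [mul_comm] at this; exact this)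
  have hQQ : Q * (Qᴴ * M) = 1 := by
    rw [mul_eq_one_comm]
    exact hQMQ
  -- u = Q *ᵥ w
  have hwQ : (Qᴴ * M) *ᵥ u = w := by
    ext j
    rw [hw j]
    simp only [Matrix.mulVec, Matrix.mul_apply, dotProduct, Pi.star_apply,
      Matrix.conjTranspose_apply, hQ, Matrix.of_apply]
    simp only [Finset.sum_mul, Finset.mul_sum]
    rw [Finset.sum_comm]
    exact Finset.sum_congr rfl fun b _ => Finset.sum_congr rfl fun a _ => by ring
  have huQw : u = Q *ᵥ w := by
    rw [← hwQ, Matrix.mulVec_mulVec, hQQ, Matrix.one_mulVec]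
  -- A^k * Q = Q * diagonal (lam ^ k)
  have hAQ : A * Q = Q * Matrix.diagonal lam := by
    ext i j
    have := congrFun (heig j) i
    simp only [Matrix.mulVec, dotProduct, Pi.smul_apply, smul_eq_mul] at this
    simp only [Matrix.mul_apply, hQ, Matrix.of_apply, Matrix.diagonal]
    rw [show (∑ x, A i x * q j x) = lam j * q j i from this]
    rw [Finset.sum_eq_single j] <;> simp +contextual [mul_comm]
  have hAkQ : ∀ k : ℕ, A ^ k * Q = Q * Matrix.diagonal (fun j => lam j ^ k) := by
    intro k
    induction k with
    | zero => simp
    | succ k ih =>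
      rw [pow_succ, Matrix.mul_assoc, hAQ, ← Matrix.mul_assoc, ih, Matrix.mul_assoc,
        Matrix.diagonal_mul_diagonal]
      simp [pow_succ]
  -- Krylov matrix = Q * W
  set W : Matrix (Fin n) (Fin m) ℂ :=
    Matrix.of fun (j : Fin n) (k : Fin m) => lam j ^ (k : ℕ) * w j with hW
  have hK : (Matrix.of fun i (k : Fin m) => ((A ^ (k : ℕ)) *ᵥ u) i) = Q * W := by
    ext i k
    rw [Matrix.of_apply, huQw, Matrix.mulVec_mulVec, hAkQ]
    simp only [Matrix.mulVec, dotProduct, Matrix.mul_apply, hW, Matrix.of_apply]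
    refine Finset.sum_congr rfl fun j _ => ?_
    simp [Matrix.diagonal, mul_ite, Finset.sum_ite_eq, Finset.sum_ite_eq', mul_assoc]
  rw [hK, Matrix.rank_mul_eq_right_of_isUnit_det Q W hdetQ]
  exact weighted_vandermonde_rank lam w
end

section
/- Let λ_1 < ... < λ_n be real numbers, w_1,...,w_n nonzero complex numbers, and suppose θ_1 < ... < θ_m (m < n) and c_1,...,c_m ∈ ℂ satisfy the quadrature identity ∑_{j=1}^n |w_j|² p(λ_j) = ∑_{j=1}^m |c_j|² p(θ_j) for all polynomials p of degree ≤ 2m−2. Then c_j ≠ 0 for all j = 1,...,m. -/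
open Polynomial

/-- If distinct nodes `θ` with weights `‖c j‖²` reproduce the discrete
measure with atoms `lam j` (strictly increasing) and nonzero weights `‖w j‖²` for all
polynomials of degree ≤ 2m−2, and `m < n`, then all `c j` are nonzero. -/
theorem stmt_1 {n m : ℕ} (hmn : m < n)
    (lam : Fin n → ℝ) (hlam : StrictMono lam)
    (w : Fin n → ℂ) (hw : ∀ j, w j ≠ 0)
    (θ : Fin m → ℝ) (hθ : StrictMono θ)
    (c : Fin m → ℂ)
    (hquad : ∀ p : Polynomial ℝ, p.natDegree ≤ 2 * m - 2 →
      ∑ j, ‖w j‖ ^ 2 * p.eval (lam j) = ∑ j, ‖c j‖ ^ 2 * p.eval (θ j)) :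
    ∀ j, c j ≠ 0 := by
  intro k hk
  set S : Finset (Fin m) := Finset.univ.erase k with hS
  set p : Polynomial ℝ := ∏ j ∈ S, (X - C (θ j)) ^ 2 with hp
  have hScard : S.card = m - 1 := by
    simp [hS, Finset.card_erase_of_mem]
  have hdeg : p.natDegree ≤ 2 * m - 2 := by
    have h1 : p.natDegree = ∑ j ∈ S, 2 := by
      rw [hp, Polynomial.natDegree_prod]
      · simp [Polynomial.natDegree_pow]
      · intro j _; exact pow_ne_zero _ (X_sub_C_ne_zero _)
    rw [h1, Finset.sum_const, hScard, smul_eq_mul]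
    have : 1 ≤ m := k.pos
    omega
  have heval : ∀ x : ℝ, p.eval x = ∏ j ∈ S, (x - θ j) ^ 2 := by
    intro x; simp [hp, eval_prod]
  have hrhs : ∑ j, ‖c j‖ ^ 2 * p.eval (θ j) = 0 := by
    apply Finset.sum_eq_zero
    intro j _
    by_cases hjk : j = k
    · subst hjk; simp [hk]
    · have : p.eval (θ j) = 0 := by
        rw [heval]
        apply Finset.prod_eq_zero (Finset.mem_erase.mpr ⟨hjk, Finset.mem_univ j⟩)
        simp
      simp [this]
  have hlhs : ∑ j, ‖w j‖ ^ 2 * p.eval (lam j) = 0 := by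
    rw [hquad p hdeg, hrhs]
  -- find j0 with lam j0 not among θ j, j ∈ S
  obtain ⟨j0, hj0⟩ : ∃ j0 : Fin n, lam j0 ∉ S.image θ := by
    by_contra h
    push_neg at h
    have hsub : Finset.univ.image lam ⊆ S.image θ := by
      intro x hx
      simp only [Finset.mem_image, Finset.mem_univ, true_and] at hx
      obtain ⟨j, rfl⟩ := hx
      exact h j
    have h1 : (Finset.univ.image lam).card = n := by
      rw [Finset.card_image_of_injective _ hlam.injective, Finset.card_univ, Fintype.card_fin]
    have h2 : (S.image θ).card ≤ m - 1 := le_trans (Finset.card_image_le) (le_of_eq hScard)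
    have := Finset.card_le_card hsub
    omega
  have hpos : 0 < p.eval (lam j0) := by
    rw [heval]
    apply Finset.prod_pos
    intro j hj
    have hne : lam j0 - θ j ≠ 0 := by
      intro habs
      apply hj0
      exact Finset.mem_image.mpr ⟨j, hj, by linarith [sub_eq_zero.mp habs]⟩
    positivity
  have hterm : ∀ j ∈ (Finset.univ : Finset (Fin n)), 0 ≤ ‖w j‖ ^ 2 * p.eval (lam j) := by
    intro j _
    have : 0 ≤ p.eval (lam j) := by
      rw [heval]; apply Finset.prod_nonneg; intro i _; positivity
    positivity
  have := (Finset.sum_eq_zero_iff_of_nonneg hterm).mp hlhs j0 (Finset.mem_univ j0)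
  have hw0 : 0 < ‖w j0‖ ^ 2 := by
    exact pow_pos (norm_pos_iff.mpr (hw j0)) 2
  nlinarith
end

section
/- Let θ_1 < ... < θ_m be real numbers and 1 ≤ k < m. Then there exists a real polynomial p of degree at most 2m−2 such that p(θ_j) = 1 for j = 1,...,k, p(θ_j) = 0 for j = k+1,...,m, and p(λ) ≤ 1 for all λ < θ_{k+1} and p(λ) ≤ 0 for all λ ≥ θ_{k+1}, with the inequalities strict for λ ∉ {θ_1,...,θ_m}. -/
open Polynomial

private lemma rolle_poly (p : ℝ[X]) {a b : ℝ} (hab : a < b) (h : p.eval a = p.eval b) :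
    ∃ c, c ∈ Set.Ioo a b ∧ (derivative p).eval c = 0 := by
  obtain ⟨c, hc, hc'⟩ := exists_deriv_eq_zero hab ((p.continuous).continuousOn (s := Set.Icc a b))
    (by simpa using h)
  exact ⟨c, hc, by rw [← Polynomial.deriv]; exact hc'⟩

private lemma deriv_eval_zero_of_sq_dvd {p : ℝ[X]} {a : ℝ} (h : (X - C a)^2 ∣ p) :
    (derivative p).eval a = 0 := by
  obtain ⟨r, rfl⟩ := h
  simp [derivative_mul, derivative_pow]

private lemma sq_dvd_derivative_of_cube_dvd {p : ℝ[X]} {a : ℝ} (h : (X - C a)^3 ∣ p) :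
    (X - C a)^2 ∣ derivative p := by
  obtain ⟨r, rfl⟩ := h
  refine ⟨C 3 * derivative (X - C a) * r + (X - C a) * derivative r, ?_⟩
  rw [derivative_mul, derivative_pow]
  ring

private lemma card_le_natDegree_of_roots {p : ℝ[X]} (hp : p ≠ 0) (S : Finset ℝ)
    (h : ∀ x ∈ S, p.eval x = 0) : S.card ≤ p.natDegree := by
  classical
  have h1 : S ⊆ p.roots.toFinset := fun x hx =>
    Multiset.mem_toFinset.2 (mem_roots'.2 ⟨hp, h x hx⟩)
  calc S.card ≤ p.roots.toFinset.card := Finset.card_le_card h1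
    _ ≤ Multiset.card p.roots := Multiset.toFinset_card_le _
    _ ≤ p.natDegree := p.card_roots'

private lemma card_succ_le_natDegree {p : ℝ[X]} (hp : p ≠ 0) (S : Finset ℝ)
    (h : ∀ x ∈ S, p.eval x = 0) {a : ℝ} (ha : a ∈ S) (h2 : (X - C a)^2 ∣ p) :
    S.card + 1 ≤ p.natDegree := by
  classical
  have hle : S.val + {a} ≤ p.roots := by
    rw [Multiset.le_iff_count]
    intro x
    rw [Multiset.count_add, count_roots]
    by_cases hx : x = a
    · subst hx
      have h2' : 2 ≤ p.rootMultiplicity x := (le_rootMultiplicity_iff hp).2 h2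
      have : S.val.count x ≤ 1 := Multiset.nodup_iff_count_le_one.1 S.nodup x
      rw [Multiset.count_singleton_self]
      omega
    · simp only [Multiset.count_singleton, if_neg hx, add_zero]
      by_cases hxS : x ∈ S
      · have h3 : 0 < p.rootMultiplicity x := (rootMultiplicity_pos hp).2 (h x hxS)
        have h4 : S.val.count x ≤ 1 := Multiset.nodup_iff_count_le_one.1 S.nodup x
        omega
      · simp [Multiset.count_eq_zero_of_notMem (show x ∉ S.val from hxS)]
  have := Multiset.card_le_card hle
  simpa using this.trans p.card_roots'

private lemma neg_of_no_zero_right {u : ℝ[X]} {a : ℝ} (ha : u.eval a < 0)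
    (h : ∀ z, a ≤ z → u.eval z ≠ 0) : ∀ x, a ≤ x → u.eval x < 0 := by
  intro x hx
  by_contra hpos
  push_neg at hpos
  have h0 : (0:ℝ) ∈ Set.Icc (eval a u) (eval x u) := ⟨le_of_lt ha, hpos⟩
  obtain ⟨z, hz, hz0⟩ := intermediate_value_Icc hx ((u.continuous).continuousOn) h0
  exact h z hz.1 hz0

private lemma pos_of_no_zero_left {v : ℝ[X]} {b : ℝ} (hb : 0 < v.eval b)
    (h : ∀ z, z ≤ b → v.eval z ≠ 0) : ∀ x, x ≤ b → 0 < v.eval x := by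
  intro x hx
  by_contra hneg
  push_neg at hneg
  have h0 : (0:ℝ) ∈ Set.Icc (eval x v) (eval b v) := ⟨hneg, le_of_lt hb⟩
  obtain ⟨z, hz, hz0⟩ := intermediate_value_Icc hx ((v.continuous).continuousOn) h0
  exact h z hz.2 hz0

private lemma exists_max_node (m : ℕ) (t : ℕ → ℝ) (z : ℝ) (j0 : ℕ) (hj0 : j0 < m)
    (h0 : t j0 < z) : ∃ j, j < m ∧ t j < z ∧ ∀ i, i < m → t i < z → i ≤ j := by
  classical
  set s := (Finset.range m).filter (fun i => t i < z) with hs_def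
  have h0s : j0 ∈ s := by
    rw [hs_def, Finset.mem_filter, Finset.mem_range]; exact ⟨hj0, h0⟩
  have hsne : s.Nonempty := ⟨j0, h0s⟩
  have hmem : s.max' hsne ∈ Finset.filter (fun i => t i < z) (Finset.range m) :=
    s.max'_mem hsne
  rw [Finset.mem_filter, Finset.mem_range] at hmem
  refine ⟨s.max' hsne, hmem.1, hmem.2, ?_⟩
  intro i hi hlt
  exact s.le_max' i (by rw [hs_def, Finset.mem_filter, Finset.mem_range]; exact ⟨hi, hlt⟩)

set_option maxHeartbeats 1000000 in
private theorem aux (m K : ℕ) (t : ℕ → ℝ)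
    (ht : ∀ i j, i < j → j < m → t i < t j) (hK : K + 1 < m) :
    ∃ p : ℝ[X], p.natDegree ≤ 2 * m - 2 ∧
      (∀ j, j ≤ K → p.eval (t j) = 1) ∧
      (∀ j, K < j → j < m → p.eval (t j) = 0) ∧
      (∀ x, x < t (K+1) → p.eval x ≤ 1) ∧
      (∀ x, t (K+1) ≤ x → p.eval x ≤ 0) ∧
      (∀ x, (∀ j, j < m → x ≠ t j) →
        (x < t (K+1) → p.eval x < 1) ∧ (t (K+1) ≤ x → p.eval x < 0)) := by
  classical
  have htne : ∀ i j, i < m → j < m → i ≠ j → t i ≠ t j := by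
    intro i j hi hj hij
    rcases Nat.lt_or_ge i j with h | h
    · exact ne_of_lt (ht i j h hj)
    · exact ne_of_gt (ht j i (by omega) hi)
  have htle : ∀ i j, i ≤ j → j < m → t i ≤ t j := by
    intro i j hij hj
    rcases Nat.eq_or_lt_of_le hij with rfl | h
    · exact le_refl _
    · exact le_of_lt (ht i j h hj)
  set a := t (K+1) with ha_def
  set F : ℝ[X] := ∏ j ∈ Finset.range (K+1), (X - C (t j))^2 with hF_def
  set G : ℝ[X] := (X - C a) * ∏ j ∈ Finset.Ico (K+2) m, (X - C (t j))^2 with hG_def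
  have hFmonic : F.Monic := monic_prod_of_monic _ _ fun i _ => (monic_X_sub_C _).pow 2
  have hF0 : F ≠ 0 := hFmonic.ne_zero
  have hFdeg : F.natDegree = 2*K+2 := by
    rw [hF_def, natDegree_prod _ _ (fun i _ => pow_ne_zero 2 (X_sub_C_ne_zero _))]
    simp [natDegree_pow, natDegree_X_sub_C, Finset.sum_const, Finset.card_range]
    omega
  have hcop : IsCoprime F G := by
    rw [hF_def, hG_def]
    apply IsCoprime.prod_left
    intro i hi
    rw [Finset.mem_range] at hi
    apply IsCoprime.pow_left
    apply IsCoprime.mul_right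
    · exact isCoprime_X_sub_C_of_isUnit_sub (isUnit_iff_ne_zero.2 (sub_ne_zero.2
        (htne i (K+1) (by omega) hK (by omega))))
    · apply IsCoprime.prod_right
      intro j hj
      rw [Finset.mem_Ico] at hj
      apply IsCoprime.pow_right
      exact isCoprime_X_sub_C_of_isUnit_sub (isUnit_iff_ne_zero.2 (sub_ne_zero.2
        (htne i j (by omega) (by omega) (by omega))))
  obtain ⟨A, B, hAB⟩ := hcop
  set u := B %ₘ F with hu_def
  have hmod : u + F * (B /ₘ F) = B := by rw [hu_def]; exact modByMonic_add_div B F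
  set v := A + G * (B /ₘ F) with hv_def
  have hvkey : F * v = 1 - G * u := by
    rw [hv_def]; linear_combination hAB + G * hmod
  set P := G * u with hP_def
  have hpoly1 : F * v + G * u = 1 := by linear_combination hvkey
  have hkey : ∀ x, F.eval x * v.eval x + G.eval x * u.eval x = 1 := by
    intro x
    have h1 : (F * v + G * u).eval x = (1:ℝ[X]).eval x := by rw [hpoly1]
    simpa using h1
  have hPeval : ∀ x, P.eval x = G.eval x * u.eval x := fun x => by rw [hP_def, eval_mul]
  have h1P : ∀ x, 1 - P.eval x = F.eval x * v.eval x := by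
    intro x; have := hkey x; rw [hPeval]; linarith
  have hudeg : u.natDegree ≤ 2*K+1 := by
    by_cases h : u = 0
    · simp [h]
    · have h1 : u.degree < F.degree := by rw [hu_def]; exact degree_modByMonic_lt B hFmonic
      have h2 : u.natDegree < F.natDegree := natDegree_lt_natDegree h h1
      omega
  have hGdeg : G.natDegree ≤ 2*m - 2*K - 3 := by
    rw [hG_def]
    refine le_trans natDegree_mul_le ?_
    have h2 : (∏ j ∈ Finset.Ico (K+2) m, (X - C (t j))^2).natDegree ≤ 2*(m - (K+2)) := by
      refine le_trans (natDegree_prod_le _ _) ?_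
      have h3 : ∀ j ∈ Finset.Ico (K+2) m, ((X - C (t j))^2).natDegree = 2 := by
        intro j _; simp [natDegree_pow, natDegree_X_sub_C]
      rw [Finset.sum_congr rfl h3]
      simp [Finset.sum_const, Nat.card_Ico]
      omega
    have h1 : ((X:ℝ[X]) - C a).natDegree = 1 := natDegree_X_sub_C a
    omega
  have hPdeg : P.natDegree ≤ 2*m - 2 := by
    rw [hP_def]
    refine le_trans natDegree_mul_le ?_
    omega
  have hFz : ∀ j, j ≤ K → F.eval (t j) = 0 := by
    intro j hj
    rw [hF_def, eval_prod]
    apply Finset.prod_eq_zero (i := j) (Finset.mem_range.2 (by omega))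
    simp
  have hGz : ∀ j, K+1 ≤ j → j < m → G.eval (t j) = 0 := by
    intro j h1 h2
    rw [hG_def, eval_mul]
    rcases Nat.eq_or_lt_of_le h1 with rfl | h
    · simp [ha_def]
    · have h3 : (∏ j ∈ Finset.Ico (K+2) m, ((X:ℝ[X]) - C (t j))^2).eval (t j) = 0 := by
        rw [eval_prod]
        apply Finset.prod_eq_zero (i := j) (Finset.mem_Ico.2 ⟨by omega, h2⟩)
        simp
      rw [h3, mul_zero]
  have hval1 : ∀ j, j ≤ K → P.eval (t j) = 1 := by
    intro j hj
    have h1 := hkey (t j); rw [hFz j hj, zero_mul, zero_add] at h1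
    rw [hPeval]; exact h1
  have hval0 : ∀ j, K+1 ≤ j → j < m → P.eval (t j) = 0 := by
    intro j h1 h2; rw [hPeval, hGz j h1 h2, zero_mul]
  have hD0 : derivative P ≠ 0 := by
    intro h
    have h1 : P.natDegree = 0 := natDegree_eq_zero_of_derivative_eq_zero h
    obtain ⟨cc, hc⟩ := natDegree_eq_zero.1 h1
    have e1 := hval1 K le_rfl
    have e0 := hval0 (K+1) le_rfl hK
    rw [← hc] at e1 e0
    simp at e1 e0; rw [e1] at e0; norm_num at e0
  have hDdeg : (derivative P).natDegree ≤ 2*m - 3 := by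
    have := natDegree_derivative_le P
    omega
  have hsqF : ∀ j, j ≤ K → (X - C (t j))^2 ∣ F := fun j hj => by
    rw [hF_def]; exact Finset.dvd_prod_of_mem _ (Finset.mem_range.2 (by omega))
  have hsqG : ∀ j, K+2 ≤ j → j < m → (X - C (t j))^2 ∣ G := fun j h1 h2 => by
    rw [hG_def]; exact Dvd.dvd.mul_left (Finset.dvd_prod_of_mem _ (Finset.mem_Ico.2 ⟨h1, h2⟩)) _
  have h1Psub : (1:ℝ[X]) - P = F * v := by rw [hP_def, hvkey]
  have hDnode : ∀ j, j < m → j ≠ K+1 → (derivative P).eval (t j) = 0 := by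
    intro j hj hjne
    rcases Nat.lt_or_ge j (K+1) with h | h
    · have hd : (X - C (t j))^2 ∣ 1 - P := by rw [h1Psub]; exact (hsqF j (by omega)).mul_right v
      have h2 := deriv_eval_zero_of_sq_dvd hd
      rw [derivative_sub, derivative_one, zero_sub, eval_neg, neg_eq_zero] at h2
      exact h2
    · have hd : (X - C (t j))^2 ∣ P := by rw [hP_def]; exact (hsqG j (by omega) hj).mul_right u
      exact deriv_eval_zero_of_sq_dvd hd
  have hRex : ∀ j, ∃ c, j + 1 < m → j ≠ K →
      c ∈ Set.Ioo (t j) (t (j+1)) ∧ (derivative P).eval c = 0 := by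
    intro j
    by_cases hj : j + 1 < m ∧ j ≠ K
    · obtain ⟨hj1, hj2⟩ := hj
      have heq : P.eval (t j) = P.eval (t (j+1)) := by
        rcases Nat.lt_or_ge j K with h | h
        · rw [hval1 j (by omega), hval1 (j+1) (by omega)]
        · rw [hval0 j (by omega) (by omega), hval0 (j+1) (by omega) hj1]
      obtain ⟨c, hc1, hc2⟩ := rolle_poly P (ht j (j+1) (by omega) hj1) heq
      exact ⟨c, fun _ _ => ⟨hc1, hc2⟩⟩
    · exact ⟨0, fun h1 h2 => absurd ⟨h1, h2⟩ hj⟩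
  choose c hc using hRex
  set N : Finset ℝ := ((Finset.range m).erase (K+1)).image t with hN_def
  set R : Finset ℝ := ((Finset.range (m-1)).erase K).image c with hR_def
  have hNmem : ∀ x, x ∈ N → ∃ i, i < m ∧ i ≠ K+1 ∧ t i = x := by
    intro x hx
    rw [hN_def, Finset.mem_image] at hx
    obtain ⟨i, hi, hix⟩ := hx
    rw [Finset.mem_erase, Finset.mem_range] at hi
    exact ⟨i, hi.2, hi.1, hix⟩
  have hNmem' : ∀ i, i < m → i ≠ K+1 → t i ∈ N := by
    intro i h1 h2
    rw [hN_def, Finset.mem_image]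
    exact ⟨i, Finset.mem_erase.2 ⟨h2, Finset.mem_range.2 h1⟩, rfl⟩
  have hRmem : ∀ x, x ∈ R → ∃ j, j + 1 < m ∧ j ≠ K ∧ c j = x := by
    intro x hx
    rw [hR_def, Finset.mem_image] at hx
    obtain ⟨j, hj, hjx⟩ := hx
    rw [Finset.mem_erase, Finset.mem_range] at hj
    exact ⟨j, by omega, hj.1, hjx⟩
  have hRmem' : ∀ j, j + 1 < m → j ≠ K → c j ∈ R := by
    intro j h1 h2
    rw [hR_def, Finset.mem_image]
    exact ⟨j, Finset.mem_erase.2 ⟨h2, Finset.mem_range.2 (by omega)⟩, rfl⟩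
  have hNcard : N.card = m - 1 := by
    rw [hN_def, Finset.card_image_of_injOn, Finset.card_erase_of_mem (Finset.mem_range.2 hK),
      Finset.card_range]
    intro i hi j hj hij
    simp only [Finset.coe_erase, Set.mem_diff, Finset.mem_coe, Finset.mem_range] at hi hj
    by_contra hne
    exact htne i j hi.1 hj.1 hne hij
  have hcIoo : ∀ j, j + 1 < m → j ≠ K → t j < c j ∧ c j < t (j+1) := by
    intro j h1 h2
    exact ⟨(hc j h1 h2).1.1, (hc j h1 h2).1.2⟩
  have hcD : ∀ j, j + 1 < m → j ≠ K → (derivative P).eval (c j) = 0 := by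
    intro j h1 h2; exact (hc j h1 h2).2
  have hRcard : R.card = m - 2 := by
    have hKm : K ∈ Finset.range (m-1) := Finset.mem_range.2 (by omega)
    rw [hR_def, Finset.card_image_of_injOn, Finset.card_erase_of_mem hKm, Finset.card_range]
    · omega
    · intro i hi j hj hij
      simp only [Finset.coe_erase, Set.mem_diff, Finset.mem_coe, Finset.mem_range] at hi hj
      by_contra hne
      rcases Nat.lt_or_ge i j with h | h
      · have h1 : c i < t (i+1) := (hcIoo i (by omega) hi.2).2
        have h2 : t j < c j := (hcIoo j (by omega) hj.2).1
        have h3 : t (i+1) ≤ t j := htle (i+1) j (by omega) (by omega)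
        rw [hij] at h1; linarith
      · have h : j < i := by omega
        have h1 : c j < t (j+1) := (hcIoo j (by omega) hj.2).2
        have h2 : t i < c i := (hcIoo i (by omega) hi.2).1
        have h3 : t (j+1) ≤ t i := htle (j+1) i (by omega) (by omega)
        rw [hij] at h2; linarith
  have hc_ne_node : ∀ i, i < m → ∀ j, j + 1 < m → j ≠ K → t i ≠ c j := by
    intro i hi j hj1 hj2
    rcases Nat.lt_or_ge i (j+1) with h | h
    · have h1 : t i ≤ t j := htle i j (by omega) (by omega)
      have h2 : t j < c j := (hcIoo j hj1 hj2).1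
      linarith
    · have h1 : t (j+1) ≤ t i := htle (j+1) i h hi
      have h2 : c j < t (j+1) := (hcIoo j hj1 hj2).2
      linarith
  have hNR_disj : Disjoint N R := by
    rw [Finset.disjoint_left]
    intro x hxN hxR
    obtain ⟨i, hi1, hi2, rfl⟩ := hNmem x hxN
    obtain ⟨j, hj1, hj2, hj3⟩ := hRmem _ hxR
    exact hc_ne_node i hi1 j hj1 hj2 hj3.symm
  have hND : ∀ x ∈ N, (derivative P).eval x = 0 := by
    intro x hx
    obtain ⟨i, hi1, hi2, rfl⟩ := hNmem x hx
    exact hDnode i hi1 hi2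
  have hRD : ∀ x ∈ R, (derivative P).eval x = 0 := by
    intro x hx
    obtain ⟨j, hj1, hj2, rfl⟩ := hRmem x hx
    exact hcD j hj1 hj2
  have hcontr : ∀ r : ℝ, (derivative P).eval r = 0 → r ∉ N → r ∉ R → False := by
    intro r hr hrN hrR
    have hroots : ∀ x ∈ insert r (N ∪ R), (derivative P).eval x = 0 := by
      intro x hx
      rcases Finset.mem_insert.1 hx with rfl | hx
      · exact hr
      · rcases Finset.mem_union.1 hx with h | h
        · exact hND x h
        · exact hRD x h
    have hcard := card_le_natDegree_of_roots hD0 _ hroots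
    rw [Finset.card_insert_of_notMem (by
        intro hmem
        rcases Finset.mem_union.1 hmem with hh | hh
        · exact hrN hh
        · exact hrR hh),
      Finset.card_union_of_disjoint hNR_disj, hNcard, hRcard] at hcard
    omega
  have hcontr2 : ∀ z ∈ N, (X - C z)^2 ∣ derivative P → False := by
    intro z hz hdvd
    have hroots : ∀ x ∈ N ∪ R, (derivative P).eval x = 0 := by
      intro x hx
      rcases Finset.mem_union.1 hx with h | h
      · exact hND x h
      · exact hRD x h
    have hcard := card_succ_le_natDegree hD0 _ hroots (Finset.mem_union_left _ hz) hdvd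
    rw [Finset.card_union_of_disjoint hNR_disj, hNcard, hRcard] at hcard
    omega
  have hfresh : ∀ j, j + 1 < m → ∀ r ∈ Set.Ioo (t j) (t (j+1)),
      r ∉ N ∧ ∀ j', j' + 1 < m → j' ≠ K → j' ≠ j → r ≠ c j' := by
    intro j hj r hr
    constructor
    · intro hrN
      obtain ⟨i, hi1, hi2, rfl⟩ := hNmem r hrN
      rcases Nat.lt_or_ge i (j+1) with h | h
      · have := htle i j (by omega) (by omega); have := hr.1; linarith
      · have := htle (j+1) i h hi1; have := hr.2; linarith
    · intro j' h1 h2 h3 heq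
      rcases Nat.lt_or_ge j' j with h | h
      · have ha1 : c j' < t (j'+1) := (hcIoo j' h1 h2).2
        have ha2 : t (j'+1) ≤ t j := htle (j'+1) j (by omega) (by omega)
        have := hr.1; rw [heq] at this; linarith
      · have h' : j < j' := by omega
        have ha1 : t j' < c j' := (hcIoo j' h1 h2).1
        have ha2 : t (j+1) ≤ t j' := htle (j+1) j' (by omega) (by omega)
        have := hr.2; rw [heq] at this; linarith
  have hcontr3 : ∀ j, j + 1 < m → j ≠ K → ∀ r1 r2, r1 ∈ Set.Ioo (t j) (t (j+1)) →
      r2 ∈ Set.Ioo (t j) (t (j+1)) → r1 ≠ r2 →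
      (derivative P).eval r1 = 0 → (derivative P).eval r2 = 0 → False := by
    intro j hj hjK r1 r2 hr1 hr2 hne hd1 hd2
    have hfr1 := hfresh j hj r1 hr1
    have hfr2 := hfresh j hj r2 hr2
    have hnotR : ∀ r ∈ Set.Ioo (t j) (t (j+1)),
        (∀ j', j' + 1 < m → j' ≠ K → j' ≠ j → r ≠ c j') → r ∉ R.erase (c j) := by
      intro r hr hfr hrR
      obtain ⟨hne', hrR'⟩ := Finset.mem_erase.1 hrR
      obtain ⟨j', hj'1, hj'2, rfl⟩ := hRmem r hrR'
      have hj'j : j' ≠ j := fun h => hne' (by rw [h])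
      exact hfr j' hj'1 hj'2 hj'j rfl
    have hr1R := hnotR r1 hr1 hfr1.2
    have hr2R := hnotR r2 hr2 hfr2.2
    have hcjR : c j ∈ R := hRmem' j hj hjK
    have hroots : ∀ x ∈ insert r1 (insert r2 (N ∪ R.erase (c j))),
        (derivative P).eval x = 0 := by
      intro x hx
      rcases Finset.mem_insert.1 hx with rfl | hx
      · exact hd1
      rcases Finset.mem_insert.1 hx with rfl | hx
      · exact hd2
      rcases Finset.mem_union.1 hx with h | h
      · exact hND x h
      · exact hRD x (Finset.mem_of_mem_erase h)
    have hcard := card_le_natDegree_of_roots hD0 _ hroots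
    have hdisj : Disjoint N (R.erase (c j)) :=
      Finset.disjoint_of_subset_right (Finset.erase_subset _ _) hNR_disj
    rw [Finset.card_insert_of_notMem (by
        intro hmem
        rcases Finset.mem_insert.1 hmem with hh | hh
        · exact hne hh
        rcases Finset.mem_union.1 hh with hh' | hh'
        · exact hfr1.1 hh'
        · exact hr1R hh'),
      Finset.card_insert_of_notMem (by
        intro hmem
        rcases Finset.mem_union.1 hmem with hh | hh
        · exact hfr2.1 hh
        · exact hr2R hh),
      Finset.card_union_of_disjoint hdisj, hNcard, Finset.card_erase_of_mem hcjR, hRcard] at hcard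
    omega
  -- sign facts for F and G evaluations
  have hFeval : ∀ x, F.eval x = ∏ j ∈ Finset.range (K+1), (x - t j)^2 := by
    intro x; rw [hF_def, eval_prod]; apply Finset.prod_congr rfl; intro j _; simp
  have hGeval : ∀ x, G.eval x = (x - a) * ∏ j ∈ Finset.Ico (K+2) m, (x - t j)^2 := by
    intro x; rw [hG_def, eval_mul, eval_prod]
    simp only [eval_sub, eval_X, eval_C]
    congr 1
    apply Finset.prod_congr rfl; intro j _; simp
  have hsqpos : ∀ y : ℝ, y ≠ 0 → 0 < y^2 := by
    intro y hy
    exact lt_of_le_of_ne (sq_nonneg _) (Ne.symm (pow_ne_zero 2 hy))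
  have hFnonneg : ∀ x, 0 ≤ F.eval x := by
    intro x; rw [hFeval]; exact Finset.prod_nonneg fun j _ => sq_nonneg _
  have hFpos : ∀ x, (∀ j, j ≤ K → x ≠ t j) → 0 < F.eval x := by
    intro x hx; rw [hFeval]
    apply Finset.prod_pos
    intro j hj
    rw [Finset.mem_range] at hj
    exact hsqpos _ (sub_ne_zero.2 (hx j (by omega)))
  have hprodIco_pos : ∀ x, (∀ j, K+2 ≤ j → j < m → x ≠ t j) →
      0 < ∏ j ∈ Finset.Ico (K+2) m, (x - t j)^2 := by
    intro x hx
    apply Finset.prod_pos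
    intro j hj
    rw [Finset.mem_Ico] at hj
    exact hsqpos _ (sub_ne_zero.2 (hx j hj.1 hj.2))
  have hGnegK : G.eval (t K) < 0 := by
    rw [hGeval]
    apply mul_neg_of_neg_of_pos
    · rw [ha_def]; have := ht K (K+1) (by omega) hK; linarith
    · exact hprodIco_pos _ fun j h1 h2 => htne K j (by omega) h2 (by omega)
  have hGnonneg : ∀ x, a ≤ x → 0 ≤ G.eval x := by
    intro x hx; rw [hGeval]
    exact mul_nonneg (by linarith) (Finset.prod_nonneg fun j _ => sq_nonneg _)
  have hGpos : ∀ x, a < x → (∀ j, j < m → x ≠ t j) → 0 < G.eval x := by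
    intro x h1 h2; rw [hGeval]
    exact mul_pos (by linarith) (hprodIco_pos _ fun j hj1 hj2 => h2 j hj2)
  -- u has no zeros on [t K, ∞)
  have huK : G.eval (t K) * u.eval (t K) = 1 := by
    have h1 := hkey (t K); rw [hFz K le_rfl, zero_mul, zero_add] at h1; exact h1
  have hu_ne : ∀ z, t K ≤ z → u.eval z ≠ 0 := by
    intro z hz hz0
    have hPz : P.eval z = 0 := by rw [hPeval, hz0, mul_zero]
    by_cases hza : z = a
    · have hdG : (X - C z) ∣ G := by rw [hG_def, hza]; exact Dvd.dvd.mul_right dvd_rfl _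
      have hdu : (X - C z) ∣ u := dvd_iff_isRoot.2 hz0
      have hsq : (X - C z)^2 ∣ P := by rw [hP_def, sq]; exact mul_dvd_mul hdG hdu
      have hDz := deriv_eval_zero_of_sq_dvd hsq
      apply hcontr z hDz
      · intro hzN
        obtain ⟨i, hi1, hi2, hieq⟩ := hNmem z hzN
        rw [hza, ha_def] at hieq
        exact htne i (K+1) hi1 hK hi2 hieq
      · intro hzR
        obtain ⟨j, hj1, hj2, hjeq⟩ := hRmem z hzR
        rw [hza, ha_def] at hjeq
        exact hc_ne_node (K+1) hK j hj1 hj2 hjeq.symm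
    · by_cases hnode : ∃ j, K+2 ≤ j ∧ j < m ∧ z = t j
      · obtain ⟨j, hj1, hj2, rfl⟩ := hnode
        have hcube : (X - C (t j))^3 ∣ P := by
          rw [hP_def, show ((X:ℝ[X]) - C (t j))^3 = (X - C (t j))^2 * (X - C (t j)) by ring]
          exact mul_dvd_mul (hsqG j hj1 hj2) (dvd_iff_isRoot.2 hz0)
        exact hcontr2 (t j) (hNmem' j hj2 (by omega)) (sq_dvd_derivative_of_cube_dvd hcube)
      · have hzK : z ≠ t K := by
          intro h
          rw [h] at hz0
          rw [hz0, mul_zero] at huK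
          norm_num at huK
      
        have hznode : ∀ j, j < m → z ≠ t j := by
          intro j hj heq
          rcases Nat.lt_or_ge j K with h | h
          · have h1 := ht j K h (by omega)
            rw [heq] at hz; linarith
          · rcases Nat.eq_or_lt_of_le h with rfl | h'
            · exact hzK heq
            · rcases Nat.eq_or_lt_of_le (show K+1 ≤ j by omega) with h'' | h''
              · exact hza (by rw [heq, ha_def, h''])
              · exact hnode ⟨j, by omega, hj, heq⟩
        have hzK' : t K < z := lt_of_le_of_ne hz (Ne.symm hzK)
        rcases lt_trichotomy z a with h | h | h
        · obtain ⟨r, hr, hrD⟩ := rolle_poly P h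
            (by rw [hPz, ha_def, hval0 (K+1) le_rfl hK])
          have hrIoo : r ∈ Set.Ioo (t K) (t (K+1)) := ⟨lt_trans hzK' hr.1, hr.2⟩
          obtain ⟨hrN, hrc⟩ := hfresh K hK r hrIoo
          apply hcontr r hrD hrN
          intro hrR
          obtain ⟨j', hj'1, hj'2, rfl⟩ := hRmem r hrR
          exact hrc j' hj'1 hj'2 hj'2 rfl
        · exact hza h
        · by_cases hzm : t (m-1) < z
          · obtain ⟨r, hr, hrD⟩ := rolle_poly P hzm
              (by rw [hval0 (m-1) (by omega) (by omega), hPz])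
            apply hcontr r hrD
            · intro hrN
              obtain ⟨i, hi1, hi2, hieq⟩ := hNmem r hrN
              have := htle i (m-1) (by omega) (by omega)
              have := hr.1; rw [← hieq] at this; linarith
            · intro hrR
              obtain ⟨j', hj'1, hj'2, hjeq⟩ := hRmem r hrR
              have h1 : c j' < t (j'+1) := (hcIoo j' hj'1 hj'2).2
              have h2 : t (j'+1) ≤ t (m-1) := htle (j'+1) (m-1) (by omega) (by omega)
              have := hr.1; rw [← hjeq] at this; linarith
          · push_neg at hzm
            obtain ⟨j, jm, jlt, hjmax⟩ := exists_max_node m t z (K+1) (by omega)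
              (by rw [← ha_def]; exact h)
            have hjK1 : K+1 ≤ j := hjmax (K+1) (by omega) (by rw [← ha_def]; exact h)
            have hjm : j + 1 < m := by
              rcases Nat.eq_or_lt_of_le (show j ≤ m-1 by omega) with h' | h'
              · exfalso
                have : z < t (m-1) := lt_of_le_of_ne hzm (hznode (m-1) (by omega))
                rw [h'] at jlt; linarith
              · omega
            have hz2 : z < t (j+1) := by
              have h2 : ¬ t (j+1) < z := fun hlt => absurd (hjmax (j+1) hjm hlt) (by omega)
              exact lt_of_le_of_ne (not_lt.1 h2) (hznode (j+1) hjm)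
            obtain ⟨r1, hr1, hd1⟩ := rolle_poly P jlt (by rw [hval0 j hjK1 jm, hPz])
            obtain ⟨r2, hr2, hd2⟩ := rolle_poly P hz2 (by rw [hPz, hval0 (j+1) (by omega) hjm])
            exact hcontr3 j hjm (by omega) r1 r2 ⟨hr1.1, lt_trans hr1.2 hz2⟩
              ⟨lt_trans jlt hr2.1, hr2.2⟩ (by have := hr1.2; have := hr2.1; linarith) hd1 hd2
  -- v has no zeros on (-∞, a]
  have hva : F.eval a * v.eval a = 1 := by
    have h1 := hkey a
    have hGa : G.eval a = 0 := by rw [ha_def]; exact hGz (K+1) le_rfl hK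
    rw [hGa, zero_mul, add_zero] at h1; exact h1
  have hv_ne : ∀ z, z ≤ a → v.eval z ≠ 0 := by
    intro z hz hz0
    have hP1 : P.eval z = 1 := by have := h1P z; rw [hz0, mul_zero] at this; linarith
    by_cases hza : z = a
    · rw [hza] at hz0; rw [hz0, mul_zero] at hva; norm_num at hva
    · have hza' : z < a := lt_of_le_of_ne hz hza
      by_cases hnode : ∃ j, j ≤ K ∧ z = t j
      · obtain ⟨j, hj, rfl⟩ := hnode
        have hcube : (X - C (t j))^3 ∣ 1 - P := by
          rw [h1Psub, show ((X:ℝ[X]) - C (t j))^3 = (X - C (t j))^2 * (X - C (t j)) by ring]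
          exact mul_dvd_mul (hsqF j hj) (dvd_iff_isRoot.2 hz0)
        have hsqD : (X - C (t j))^2 ∣ derivative P := by
          have h1 := sq_dvd_derivative_of_cube_dvd hcube
          rw [derivative_sub, derivative_one, zero_sub] at h1
          exact (dvd_neg).1 h1
        exact hcontr2 (t j) (hNmem' j (by omega) (by omega)) hsqD
      · have hznode : ∀ j, j < m → z ≠ t j := by
          intro j hj heq
          rcases Nat.lt_or_ge j (K+1) with h | h
          · exact hnode ⟨j, by omega, heq⟩
          · have h1 : a ≤ t j := by rw [ha_def]; exact htle (K+1) j h hj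
            rw [heq] at hza'; linarith
        rcases lt_trichotomy z (t 0) with h | h | h
        · obtain ⟨r, hr, hrD⟩ := rolle_poly P h (by rw [hP1, hval1 0 (by omega)])
          apply hcontr r hrD
          · intro hrN
            obtain ⟨i, hi1, hi2, hieq⟩ := hNmem r hrN
            have h1 : t 0 ≤ t i := htle 0 i (by omega) hi1
            have := hr.2; rw [← hieq] at this; linarith
          · intro hrR
            obtain ⟨j', hj'1, hj'2, hjeq⟩ := hRmem r hrR
            have h1 : t j' < c j' := (hcIoo j' hj'1 hj'2).1
            have h2 : t 0 ≤ t j' := htle 0 j' (by omega) (by omega)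
            have := hr.2; rw [← hjeq] at this; linarith
        · exact hznode 0 (by omega) h
        · obtain ⟨j, jm, jlt, hjmax⟩ := exists_max_node m t z 0 (by omega) h
          have hjK : j ≤ K := by
            by_contra hcon
            push_neg at hcon
            have h1 : a ≤ t j := by rw [ha_def]; exact htle (K+1) j (by omega) jm
            linarith
          have hjm : j + 1 < m := by omega
          have hz2 : z < t (j+1) := by
            have h2 : ¬ t (j+1) < z := fun hlt => absurd (hjmax (j+1) hjm hlt) (by omega)
            exact lt_of_le_of_ne (not_lt.1 h2) (hznode (j+1) hjm)
          rcases Nat.eq_or_lt_of_le hjK with rfl | hjK'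
          · -- j = K : one Rolle point in (t K, z) ⊆ (t K, t (K+1))
            obtain ⟨r, hr, hrD⟩ := rolle_poly P jlt (by rw [hval1 j le_rfl, hP1])
            have hrIoo : r ∈ Set.Ioo (t j) (t (j+1)) := ⟨hr.1, lt_trans hr.2 hz2⟩
            obtain ⟨hrN, hrc⟩ := hfresh j hjm r hrIoo
            apply hcontr r hrD hrN
            intro hrR
            obtain ⟨j', hj'1, hj'2, rfl⟩ := hRmem r hrR
            exact hrc j' hj'1 hj'2 hj'2 rfl
          · obtain ⟨r1, hr1, hd1⟩ := rolle_poly P jlt (by rw [hval1 j (by omega), hP1])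
            obtain ⟨r2, hr2, hd2⟩ := rolle_poly P hz2
              (by rw [hP1, hval1 (j+1) (by omega)])
            exact hcontr3 j hjm (by omega) r1 r2 ⟨hr1.1, lt_trans hr1.2 hz2⟩
              ⟨lt_trans jlt hr2.1, hr2.2⟩ (by have := hr1.2; have := hr2.1; linarith) hd1 hd2
  have huneg : ∀ x, t K ≤ x → u.eval x < 0 := by
    apply neg_of_no_zero_right ?_ hu_ne
    nlinarith [huK, hGnegK]
  have hvpos : ∀ x, x ≤ a → 0 < v.eval x := by
    apply pos_of_no_zero_left ?_ hv_ne
    nlinarith [hva, hFnonneg a]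
  have htKa : t K < a := by rw [ha_def]; exact ht K (K+1) (by omega) hK
  refine ⟨P, hPdeg, hval1, fun j h1 h2 => hval0 j h1 h2, ?_, ?_, ?_⟩
  · intro x hx
    have h1 := h1P x
    have h2 := hvpos x (le_of_lt hx)
    nlinarith [hFnonneg x]
  · intro x hx
    rcases eq_or_lt_of_le hx with h | h
    · rw [← h, ha_def, hval0 (K+1) le_rfl hK]
    · have h1 := hGnonneg x (le_of_lt h)
      have h2 := huneg x (by linarith)
      rw [hPeval]
      nlinarith
  · intro x hxnode
    constructor
    · intro hx
      have h1 := h1P x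
      have h2 := hvpos x (le_of_lt hx)
      have h3 := hFpos x fun j hj => hxnode j (by omega)
      nlinarith
    · intro hx
      have hxa : a < x := lt_of_le_of_ne hx (fun h => hxnode (K+1) hK (by rw [← h, ha_def]))
      have h1 := hGpos x hxa hxnode
      have h2 := huneg x (by linarith)
      rw [hPeval]
      nlinarith
/-- Polynomial minorant `p_{−,k}` of the Heaviside-type step function:
for nodes `θ_1 < … < θ_m` and `1 ≤ k < m` there is a real polynomial of degree at
most `2m−2` with `p(θ_j) = 1` for `j ≤ k`, `p(θ_j) = 0` for `j > k`, `p ≤ 1` on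
`(-∞, θ_{k+1})`, `p ≤ 0` on `[θ_{k+1}, ∞)`, with strict inequalities off the nodes. -/
theorem stmt_3 {m : ℕ} (θ : Fin m → ℝ) (hθ : StrictMono θ)
    (k : Fin m) (hk : (k : ℕ) + 1 < m) :
    ∃ p : Polynomial ℝ, p.natDegree ≤ 2 * m - 2 ∧
      (∀ j : Fin m, j ≤ k → p.eval (θ j) = 1) ∧
      (∀ j : Fin m, k < j → p.eval (θ j) = 0) ∧
      (∀ x : ℝ, x < θ ⟨(k : ℕ) + 1, hk⟩ → p.eval x ≤ 1) ∧
      (∀ x : ℝ, θ ⟨(k : ℕ) + 1, hk⟩ ≤ x → p.eval x ≤ 0) ∧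
      (∀ x : ℝ, x ∉ Set.range θ →
        (x < θ ⟨(k : ℕ) + 1, hk⟩ → p.eval x < 1) ∧
        (θ ⟨(k : ℕ) + 1, hk⟩ ≤ x → p.eval x < 0)) := by
  classical
  set t : ℕ → ℝ := fun j => if h : j < m then θ ⟨j, h⟩ else 0 with ht_def
  have ht : ∀ i j, i < j → j < m → t i < t j := by
    intro i j hij hj
    have hi : i < m := lt_trans hij hj
    simp only [ht_def, dif_pos hi, dif_pos hj]
    exact hθ (show (⟨i, hi⟩ : Fin m) < ⟨j, hj⟩ from hij)
  obtain ⟨p, h1, h2, h3, h4, h5, h6⟩ := aux m k.val t ht hk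
  have hteq : ∀ j : Fin m, t j.val = θ j := by
    intro j
    simp only [ht_def, dif_pos j.isLt]
  have hta : t (k.val + 1) = θ ⟨(k : ℕ) + 1, hk⟩ := hteq ⟨(k : ℕ) + 1, hk⟩
  refine ⟨p, h1, ?_, ?_, ?_, ?_, ?_⟩
  · intro j hj
    rw [← hteq j]
    exact h2 j.val hj
  · intro j hj
    rw [← hteq j]
    exact h3 j.val hj j.isLt
  · intro x hx
    exact h4 x (by rw [hta]; exact hx)
  · intro x hx
    exact h5 x (by rw [hta]; exact hx)
  · intro x hx
    have hxn : ∀ j, j < m → x ≠ t j := by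
      intro j hj heq
      exact hx ⟨⟨j, hj⟩, by rw [← hteq ⟨j, hj⟩]; exact heq.symm⟩
    obtain ⟨ha, hb⟩ := h6 x hxn
    exact ⟨fun h => ha (by rw [← hta] at h; exact h), fun h => hb (by rw [← hta] at h; exact h)⟩
end

section
/- Let λ_1 < ... < λ_n and w_1,...,w_n ∈ ℂ \ {0}, and define the step function α_n(λ) = ∑_{j: λ_j ≤ λ} |w_j|². Suppose θ_1 < ... < θ_m lie in an interval (a,b) containing all λ_j, θ_k < λ_{j(k)} < θ_{k+1} for some index j(k) for each k (interlacing), and c_1,...,c_m ∈ ℂ satisfy ∑_{j=1}^n |w_j|² p(λ_j) = ∑_{j=1}^m |c_j|² p(θ_j) for all polynomials p of degree ≤ 2m−2. Then for each k = 1,...,m−1: α_n(θ_k) < |c_1|² + ... + |c_k|² < α_n(θ_{k+1}−), where α_n(θ−) = ∑_{j: λ_j < θ} |w_j|². -/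
open Polynomial

section CMSAux
open Finset

namespace CMS

/-- Divided difference of `f` over the window `u i, u (i+1), ..., u (i+d)`. -/
noncomputable def dd (u : ℕ → ℝ) (f : ℝ → ℝ) : ℕ → ℕ → ℝ
  | 0, i => f (u i)
  | d+1, i => (dd u f d (i+1) - dd u f d i) / (u (i+d+1) - u i)

variable {u : ℕ → ℝ} {f g : ℝ → ℝ}

lemma dd_zero (u : ℕ → ℝ) (f : ℝ → ℝ) (i : ℕ) : dd u f 0 i = f (u i) := rfl

lemma dd_succ (u : ℕ → ℝ) (f : ℝ → ℝ) (d i : ℕ) :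
    dd u f (d+1) i = (dd u f d (i+1) - dd u f d i) / (u (i+d+1) - u i) := rfl

lemma dd_rec (hu : StrictMono u) (f : ℝ → ℝ) (d i : ℕ) :
    dd u f (d+1) i * (u (i+d+1) - u i) = dd u f d (i+1) - dd u f d i := by
  rw [dd_succ]
  exact div_mul_cancel₀ _ (sub_ne_zero.2 (hu (by omega : i < i+d+1)).ne')

lemma dd_congr {f g : ℝ → ℝ} (h : ∀ x, f x = g x) (d i : ℕ) :
    dd u f d i = dd u g d i := by
  induction d generalizing i with
  | zero => simpa [dd_zero] using h _
  | succ d ih => rw [dd_succ, dd_succ, ih, ih]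

/-- Leibniz formula for divided differences. -/
lemma dd_mul (hu : StrictMono u) (f g : ℝ → ℝ) (d i : ℕ) :
    dd u (fun x => f x * g x) d i
      = ∑ s ∈ range (d+1), dd u f s i * dd u g (d - s) (i + s) := by
  induction d generalizing i with
  | zero => simp [dd_zero]
  | succ d ih =>
    have hΔ : u (i+d+1) - u i ≠ 0 := sub_ne_zero.2 (hu (by omega : i < i+d+1)).ne'
    apply mul_right_cancel₀ hΔ
    rw [dd_rec hu _ d i, ih (i+1), ih i]
    -- LHS = ∑ (F s (i+1) * G (d-s) (i+1+s)) - ∑ (F s i * G (d-s) (i+s))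
    have key : ∀ s ∈ range (d+1),
        dd u f s (i+1) * dd u g (d - s) (i+1+s) - dd u f s i * dd u g (d - s) (i+s)
          = dd u f (s+1) i * dd u g (d - s) (i+(s+1)) * (u (i+s+1) - u i)
            + dd u f s i * dd u g (d - s + 1) (i+s) * (u (i+d+1) - u (i+s)) := by
      intro s hs
      have hs' : s ≤ d := by simpa using Nat.lt_succ_iff.mp (mem_range.mp hs)
      have h1 : dd u f s (i+1) - dd u f s i = dd u f (s+1) i * (u (i+s+1) - u i) :=
        (dd_rec hu f s i).symm
      have h2 : dd u g (d - s) (i+s+1) - dd u g (d - s) (i+s)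
          = dd u g (d - s + 1) (i+s) * (u (i+d+1) - u (i+s)) := by
        have := (dd_rec hu g (d - s) (i+s)).symm
        rwa [show i + s + (d - s) + 1 = i + d + 1 by omega] at this
      have expand : dd u f s (i+1) * dd u g (d - s) (i+1+s)
            - dd u f s i * dd u g (d - s) (i+s)
          = (dd u f s (i+1) - dd u f s i) * dd u g (d - s) (i+s+1)
            + dd u f s i * (dd u g (d - s) (i+s+1) - dd u g (d - s) (i+s)) := by
        rw [show i+1+s = i+s+1 by omega]; ring
      rw [expand, h1, h2, show i+(s+1) = i+s+1 by omega]; ring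
    rw [← Finset.sum_sub_distrib, Finset.sum_congr rfl key, Finset.sum_add_distrib]
    -- now compare with RHS * Δ
    have RHS : (∑ s ∈ range (d+2), dd u f s i * dd u g (d + 1 - s) (i + s)) * (u (i+d+1) - u i)
        = ∑ s ∈ range (d+2), dd u f s i * dd u g (d+1-s) (i+s) * (u (i+s) - u i)
          + ∑ s ∈ range (d+2), dd u f s i * dd u g (d+1-s) (i+s) * (u (i+d+1) - u (i+s)) := by
      rw [Finset.sum_mul, ← Finset.sum_add_distrib]
      refine Finset.sum_congr rfl fun s _ => by ring
    rw [RHS]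
    congr 1
    · -- first sums: reindex
      conv_rhs => rw [Finset.sum_range_succ' (fun s => dd u f s i * dd u g (d+1-s) (i+s) * (u (i+s) - u i))]
      simp only [Nat.sub_zero, add_zero, sub_self, mul_zero]
      refine (Finset.sum_congr rfl fun s hs => ?_)
      have hs' : s ≤ d := by simpa using Nat.lt_succ_iff.mp (mem_range.mp hs)
      rw [show d + 1 - (s+1) = d - s by omega, show i + (s+1) = i + s + 1 by omega]
    · -- second sums: drop last
      conv_rhs => rw [Finset.sum_range_succ (fun s => dd u f s i * dd u g (d+1-s) (i+s) * (u (i+d+1) - u (i+s)))]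
      simp only [← add_assoc, sub_self, mul_zero, add_zero]
      refine (Finset.sum_congr rfl fun s hs => ?_).symm
      have hs' : s ≤ d := by simpa using Nat.lt_succ_iff.mp (mem_range.mp hs)
      rw [show d + 1 - s = d - s + 1 by omega]

lemma dd_const (hu : StrictMono u) (a : ℝ) (d i : ℕ) :
    dd u (fun _ => a) d i = if d = 0 then a else 0 := by
  induction d generalizing i with
  | zero => simp [dd_zero]
  | succ d ih => simp [dd_succ, ih]

/-- dd of `x ↦ (c - x)⁻¹`. -/
lemma dd_inv (hu : StrictMono u) (c : ℝ) (d i : ℕ) (hc : u (i+d) < c) :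
    dd u (fun x => (c - x)⁻¹) d i = (∏ j ∈ range (d+1), (c - u (i+j)))⁻¹ := by
  induction d generalizing i with
  | zero => simp [dd_zero]
  | succ d ih =>
    have hlt : ∀ j, j ≤ i + d + 1 → u j < c := fun j hj =>
      lt_of_le_of_lt (hu.monotone (by omega)) hc
    have h1 : dd u (fun x => (c - x)⁻¹) d (i+1)
        = (∏ j ∈ range (d+1), (c - u (i+1+j)))⁻¹ :=
      ih (i+1) (by rw [show i+1+d = i+d+1 by omega]; exact hc)
    have h2 : dd u (fun x => (c - x)⁻¹) d i
        = (∏ j ∈ range (d+1), (c - u (i+j)))⁻¹ := ih i (hlt _ (by omega))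
    have hne : ∀ j, j ≤ d + 1 → (c - u (i+j)) ≠ 0 := fun j hj =>
      sub_ne_zero.2 (hlt (i+j) (by omega)).ne'
    have hP1 : (∏ j ∈ range (d+1), (c - u (i+1+j))) ≠ 0 :=
      Finset.prod_ne_zero_iff.2 fun j hj => by
        rw [show i+1+j = i+(j+1) by omega]
        exact hne (j+1) (by have := mem_range.mp hj; omega)
    have hP0 : (∏ j ∈ range (d+1), (c - u (i+j))) ≠ 0 :=
      Finset.prod_ne_zero_iff.2 fun j hj => hne j (by have := mem_range.mp hj; omega)
    have e1 : (∏ j ∈ range (d+2), (c - u (i+j)))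
        = (c - u i) * ∏ j ∈ range (d+1), (c - u (i+1+j)) := by
      rw [Finset.prod_range_succ' (fun j => (c - u (i+j)))]
      rw [add_zero, mul_comm]
      congr 1
      exact Finset.prod_congr rfl fun j _ => by rw [show i+(j+1) = i+1+j by omega]
    have e2 : (∏ j ∈ range (d+2), (c - u (i+j)))
        = (∏ j ∈ range (d+1), (c - u (i+j))) * (c - u (i+(d+1))) :=
      Finset.prod_range_succ _ _
    have hQ : (∏ j ∈ range (d+2), (c - u (i+j))) ≠ 0 := by
      rw [e2]; exact mul_ne_zero hP0 (hne (d+1) le_rfl)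
    rw [dd_succ, h1, h2]
    rw [div_eq_iff (sub_ne_zero.2 (hu (by omega : i < i+d+1)).ne')]
    have h0ne : (c - u i) ≠ 0 := by simpa using hne 0 (by omega)
    have htne : (c - u (i+(d+1))) ≠ 0 := hne (d+1) le_rfl
    have r1 : (∏ j ∈ range (d+1), (c - u (i+1+j)))⁻¹
        = (c - u i) * (∏ j ∈ range (d+2), (c - u (i+j)))⁻¹ := by
      rw [e1, mul_inv, ← mul_assoc, mul_inv_cancel₀ h0ne, one_mul]
    have r2 : (∏ j ∈ range (d+1), (c - u (i+j)))⁻¹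
        = (c - u (i+(d+1))) * (∏ j ∈ range (d+2), (c - u (i+j)))⁻¹ := by
      rw [e2, mul_inv, mul_comm ((∏ j ∈ range (d+1), (c - u (i+j)))⁻¹) _,
        ← mul_assoc, mul_inv_cancel₀ htne, one_mul]
    rw [r1, r2, show i+d+1 = i+(d+1) by omega]
    ring


/-- The product function `x ↦ ∏_{c ∈ L} (c - x)⁻¹`. -/
noncomputable def pfun (L : List ℝ) : ℝ → ℝ := fun x => (L.map fun c => (c - x)⁻¹).prod

lemma pfun_nil : pfun [] = fun _ => (1:ℝ) := by funext x; simp [pfun]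

lemma pfun_cons (c : ℝ) (L : List ℝ) (x : ℝ) :
    pfun (c :: L) x = (c - x)⁻¹ * pfun L x := by simp [pfun]

lemma pfun_pos {L : List ℝ} {x : ℝ} (h : ∀ c ∈ L, x < c) : 0 < pfun L x := by
  induction L with
  | nil => simp [pfun]
  | cons c L ih =>
    rw [pfun_cons]
    exact mul_pos (inv_pos.2 (sub_pos.2 (h c (by simp)))) (ih fun c' hc' => h c' (by simp [hc']))

lemma dd_pfun_nonneg (hu : StrictMono u) (L : List ℝ) (d i : ℕ)
    (hL : ∀ c ∈ L, u (i+d) < c) : 0 ≤ dd u (pfun L) d i := by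
  induction L generalizing d i with
  | nil =>
    rw [pfun_nil, dd_const hu 1 d i]
    split <;> norm_num
  | cons c L ih =>
    rw [dd_congr (pfun_cons c L), dd_mul hu]
    refine Finset.sum_nonneg fun s hs => ?_
    have hs' : s ≤ d := by have := mem_range.mp hs; omega
    have hcs : u (i+s) < c := lt_of_le_of_lt (hu.monotone (by omega)) (hL c (by simp))
    rw [dd_inv hu c s i hcs]
    refine mul_nonneg (le_of_lt (inv_pos.2 (Finset.prod_pos fun j hj => ?_))) ?_
    · have := mem_range.mp hj
      exact sub_pos.2 (lt_of_le_of_lt (hu.monotone (by omega : i+j ≤ i+d)) (hL c (by simp)))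
    · refine ih (d - s) (i + s) fun c' hc' => ?_
      rw [show i + s + (d - s) = i + d by omega]
      exact hL c' (by simp [hc'])

lemma dd_pfun_pos (hu : StrictMono u) (c : ℝ) (L : List ℝ) (d i : ℕ)
    (hL : ∀ c' ∈ c :: L, u (i+d) < c') : 0 < dd u (pfun (c :: L)) d i := by
  rw [dd_congr (pfun_cons c L), dd_mul hu]
  rw [Finset.sum_range_succ]
  have hterm : 0 < dd u (fun x => (c - x)⁻¹) d i * dd u (pfun L) (d - d) (i + d) := by
    rw [dd_inv hu c d i (hL c (by simp)), Nat.sub_self, dd_zero]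
    refine mul_pos (inv_pos.2 (Finset.prod_pos fun j hj => ?_)) (pfun_pos fun c' hc' => ?_)
    · have := mem_range.mp hj
      exact sub_pos.2 (lt_of_le_of_lt (hu.monotone (by omega : i+j ≤ i+d)) (hL c (by simp)))
    · exact hL c' (by simp [hc'])
  refine lt_of_lt_of_le hterm (le_add_of_nonneg_left (Finset.sum_nonneg fun s hs => ?_))
  have hs' : s ≤ d := by have := mem_range.mp hs; omega
  rw [dd_inv hu c s i (lt_of_le_of_lt (hu.monotone (by omega : i+s ≤ i+d)) (hL c (by simp)))]
  refine mul_nonneg (le_of_lt (inv_pos.2 (Finset.prod_pos fun j hj => ?_)))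
    (dd_pfun_nonneg hu L (d - s) (i+s) fun c' hc' => ?_)
  · have := mem_range.mp hj
    exact sub_pos.2 (lt_of_le_of_lt (hu.monotone (by omega : i+j ≤ i+d)) (hL c (by simp)))
  · rw [show i + s + (d - s) = i + d by omega]
    exact hL c' (by simp [hc'])

/-- Newton basis `ω(s,i) = ∏_{j<s} (X - u (i+j))`. -/
noncomputable def nb (u : ℕ → ℝ) (s i : ℕ) : ℝ[X] := ∏ j ∈ range s, (X - C (u (i+j)))

/-- Newton form of the interpolating polynomial on the window `u i, ..., u (i+d)`. -/
noncomputable def newton (u : ℕ → ℝ) (f : ℝ → ℝ) (d i : ℕ) : ℝ[X] :=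
  ∑ s ∈ range (d+1), C (dd u f s i) * nb u s i

lemma nb_monic (u : ℕ → ℝ) (s i : ℕ) : (nb u s i).Monic :=
  monic_prod_of_monic _ _ fun j _ => monic_X_sub_C _

lemma nb_natDegree (u : ℕ → ℝ) (s i : ℕ) : (nb u s i).natDegree = s := by
  rw [nb, natDegree_prod_of_monic]
  · simp
  · exact fun j _ => monic_X_sub_C _

lemma nb_succ_right (u : ℕ → ℝ) (s i : ℕ) :
    nb u (s+1) i = nb u s i * (X - C (u (i+s))) := Finset.prod_range_succ _ _

lemma nb_succ_left (u : ℕ → ℝ) (s i : ℕ) :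
    nb u (s+1) i = (X - C (u i)) * nb u s (i+1) := by
  rw [nb, Finset.prod_range_succ' (fun j => (X - C (u (i+j))))]
  rw [add_zero, mul_comm]
  congr 1
  exact Finset.prod_congr rfl fun j _ => by rw [show i+(j+1) = i+1+j by omega]

lemma newton_succ (u : ℕ → ℝ) (f : ℝ → ℝ) (d i : ℕ) :
    newton u f (d+1) i = newton u f d i + C (dd u f (d+1) i) * nb u (d+1) i :=
  Finset.sum_range_succ _ _

/-- The key identity (†). -/
lemma newton_shift (hu : StrictMono u) (f : ℝ → ℝ) (d i : ℕ) :
    (X - C (u i)) * (newton u f d (i+1) - newton u f d i)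
      = C (dd u f d (i+1) - dd u f d i) * nb u (d+1) i := by
  induction d generalizing i with
  | zero =>
    have a1 : newton u f 0 (i+1) = C (f (u (i+1))) := by simp [newton, nb, dd_zero]
    have a2 : newton u f 0 i = C (f (u i)) := by simp [newton, nb, dd_zero]
    have a3 : nb u 1 i = X - C (u i) := by simp [nb]
    rw [a1, a2, a3, dd_zero, dd_zero, C_sub]; ring
  | succ d ih =>
    have hrec : C (dd u f (d+1) i) * C (u (i+d+1) - u i) = C (dd u f d (i+1) - dd u f d i) := by
      rw [← C_mul, dd_succ, div_mul_cancel₀ _ (sub_ne_zero.2 (hu (by omega : i < i+d+1)).ne')]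
    have expand : newton u f (d+1) (i+1) - newton u f (d+1) i
        = (newton u f d (i+1) - newton u f d i)
          + (C (dd u f (d+1) (i+1)) * nb u (d+1) (i+1) - C (dd u f (d+1) i) * nb u (d+1) i) := by
      rw [newton_succ, newton_succ]; ring
    rw [expand, mul_add, ih i]
    have w1 : nb u (d+2) i = (X - C (u i)) * nb u (d+1) (i+1) := by
      rw [show d+2 = (d+1)+1 by omega]; exact nb_succ_left u (d+1) i
    have w2 : nb u (d+2) i = nb u (d+1) i * (X - C (u (i+(d+1)))) := by
      rw [show d+2 = (d+1)+1 by omega]; exact nb_succ_right u (d+1) i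
    have e1 : (X - C (u i)) * (C (dd u f (d+1) (i+1)) * nb u (d+1) (i+1))
        = C (dd u f (d+1) (i+1)) * nb u (d+2) i := by
      rw [w1]; ring
    have e2 : C (dd u f d (i+1) - dd u f d i) * nb u (d+1) i
          - (X - C (u i)) * (C (dd u f (d+1) i) * nb u (d+1) i)
        = - (C (dd u f (d+1) i) * nb u (d+2) i) := by
      rw [← hrec, w2]
      have : C (u (i+d+1) - u i) = C (u (i+(d+1))) - C (u i) := by
        rw [← C_sub, show i+(d+1) = i+d+1 by omega]
      rw [this]; ring
    calc C (dd u f d (i+1) - dd u f d i) * nb u (d+1) i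
          + (X - C (u i)) * (C (dd u f (d+1) (i+1)) * nb u (d+1) (i+1)
            - C (dd u f (d+1) i) * nb u (d+1) i)
        = (C (dd u f d (i+1) - dd u f d i) * nb u (d+1) i
            - (X - C (u i)) * (C (dd u f (d+1) i) * nb u (d+1) i))
          + (X - C (u i)) * (C (dd u f (d+1) (i+1)) * nb u (d+1) (i+1)) := by ring
      _ = C (dd u f (d+1) (i+1)) * nb u (d+2) i - C (dd u f (d+1) i) * nb u (d+2) i := by
          rw [e1, e2]; ring
      _ = C (dd u f (d+1) (i+1) - dd u f (d+1) i) * nb u (d+2) i := by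
          rw [C_sub]; ring

/-- Neville identity. -/
lemma newton_neville (hu : StrictMono u) (f : ℝ → ℝ) (d i : ℕ) :
    C (u (i+d+1) - u i) * newton u f (d+1) i
      = (X - C (u i)) * newton u f d (i+1) - (X - C (u (i+d+1))) * newton u f d i := by
  have h1 := newton_shift hu f d i
  have hrec : C (dd u f (d+1) i) * C (u (i+d+1) - u i) = C (dd u f d (i+1) - dd u f d i) := by
    rw [← C_mul, dd_succ, div_mul_cancel₀ _ (sub_ne_zero.2 (hu (by omega : i < i+d+1)).ne')]
  rw [newton_succ, mul_add]
  rw [show C (u (i+d+1) - u i) * (C (dd u f (d+1) i) * nb u (d+1) i)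
      = (C (dd u f (d+1) i) * C (u (i+d+1) - u i)) * nb u (d+1) i by ring, hrec, ← h1]
  have : C (u (i+d+1) - u i) = (X - C (u i)) - (X - C (u (i+d+1))) := by
    rw [C_sub]; ring
  rw [this]; ring

/-- Newton form interpolates. -/
lemma newton_eval (hu : StrictMono u) (f : ℝ → ℝ) (d i r : ℕ) (hr : r ≤ d) :
    (newton u f d i).eval (u (i+r)) = f (u (i+r)) := by
  induction d generalizing i r with
  | zero =>
    interval_cases r
    simp [newton, nb, dd_zero]
  | succ d ih =>
    have hΔ : (u (i+d+1) - u i) ≠ 0 := sub_ne_zero.2 (hu (by omega : i < i+d+1)).ne'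
    have hev := congrArg (Polynomial.eval (u (i+r))) (newton_neville hu f d i)
    simp only [eval_mul, eval_sub, eval_C, eval_X] at hev
    apply mul_left_cancel₀ hΔ
    rw [hev]
    rcases Nat.eq_zero_or_pos r with rfl | hr0
    · have h2 : Polynomial.eval (u (i+0)) (newton u f d i) = f (u (i+0)) := ih i 0 (by omega)
      rw [h2, show i+0 = i from rfl]
      ring
    · rcases Nat.lt_or_ge r (d+1) with hrd | hrd
      · have h1 : Polynomial.eval (u (i+r)) (newton u f d (i+1)) = f (u (i+r)) := by
          have := ih (i+1) (r-1) (by omega)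
          rwa [show i+1+(r-1) = i+r by omega] at this
        have h2 := ih i r (by omega)
        rw [h1, h2]; ring
      · have hr' : r = d+1 := by omega
        subst hr'
        have h1 : Polynomial.eval (u (i+(d+1))) (newton u f d (i+1)) = f (u (i+(d+1))) := by
          have := ih (i+1) d (by omega)
          rwa [show i+1+d = i+(d+1) by omega] at this
        rw [h1, show i+(d+1) = i+d+1 by omega]
        ring

lemma nb_eval (u : ℕ → ℝ) (s i : ℕ) (x : ℝ) :
    (nb u s i).eval x = ∏ j ∈ range s, (x - u (i+j)) := by
  simp [nb, eval_prod]

lemma newton_natDegree_le (u : ℕ → ℝ) (f : ℝ → ℝ) (d i : ℕ) :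
    (newton u f d i).natDegree ≤ d := by
  refine natDegree_sum_le_of_forall_le _ _ fun s hs => ?_
  refine le_trans (natDegree_C_mul_le _ _) ?_
  rw [nb_natDegree]
  exact Nat.lt_succ_iff.mp (mem_range.mp hs)

lemma newton_coeff_top (u : ℕ → ℝ) (f : ℝ → ℝ) (d i : ℕ) :
    (newton u f d i).coeff d = dd u f d i := by
  rw [newton, finset_sum_coeff]
  rw [Finset.sum_eq_single d]
  · rw [coeff_C_mul]
    have h1 : (nb u d i).coeff d = 1 := by
      have h := (nb_monic u d i).coeff_natDegree
      rwa [nb_natDegree] at h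
    rw [h1, mul_one]
  · intro s hs hne
    rw [coeff_C_mul]
    have : (nb u s i).natDegree < d := by
      rw [nb_natDegree]
      have := mem_range.mp hs; omega
    rw [coeff_eq_zero_of_natDegree_lt this, mul_zero]
  · intro h
    exact absurd (mem_range.mpr (by omega)) h

/-- Insert a value `x` at position `pos` in the sequence `u`. -/
noncomputable def ins (u : ℕ → ℝ) (pos : ℕ) (x : ℝ) : ℕ → ℝ := fun j =>
  if j < pos then u j else if j = pos then x else u (j-1)

lemma ins_lt {u : ℕ → ℝ} {pos : ℕ} {x : ℝ} {j : ℕ} (h : j < pos) : ins u pos x j = u j := by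
  simp [ins, h]

lemma ins_self (u : ℕ → ℝ) (pos : ℕ) (x : ℝ) : ins u pos x pos = x := by simp [ins]

lemma ins_ge {u : ℕ → ℝ} {pos : ℕ} {x : ℝ} {j : ℕ} (h : pos ≤ j) : ins u pos x (j+1) = u j := by
  have h1 : ¬ (j+1 < pos) := by omega
  have h2 : ¬ (j+1 = pos) := by omega
  simp [ins, h1, h2]

lemma ins_strictMono {u : ℕ → ℝ} {pos : ℕ} {x : ℝ} (hu : StrictMono u)
    (h1 : ∀ j, j < pos → u j < x) (h2 : ∀ j, pos ≤ j → x < u j) :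
    StrictMono (ins u pos x) := by
  apply strictMono_nat_of_lt_succ
  intro j
  rcases Nat.lt_or_ge (j+1) pos with h | h
  · rw [ins_lt h, ins_lt (by omega)]; exact hu (by omega)
  · rcases Nat.lt_or_ge j pos with h' | h'
    · have : pos = j+1 := by omega
      subst this
      rw [ins_lt (by omega), ins_self]
      exact h1 j (by omega)
    · rw [ins_ge h']
      rcases Nat.eq_or_lt_of_le h' with h'' | h''
      · rw [← h'', ins_self]; exact h2 pos le_rfl
      · rw [show j = (j-1)+1 by omega, ins_ge (by omega), show (j-1)+1 = j by omega]
        exact hu (by omega)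

/-- Error formula: for `x` inserted at position `pos ≤ d+1`. -/
lemma newton_error (hu : StrictMono u) (f : ℝ → ℝ) (d : ℕ) (x : ℝ) (pos : ℕ)
    (hpos : pos ≤ d+1)
    (h1 : ∀ j, j < pos → u j < x) (h2 : ∀ j, pos ≤ j → x < u j) :
    f x = (newton u f d 0).eval x
      + dd (ins u pos x) f (d+1) 0 * ∏ j ∈ range (d+1), (x - u j) := by
  set u' := ins u pos x with hu'def
  have hu' : StrictMono u' := ins_strictMono hu h1 h2
  set q' := newton u' f (d+1) 0 with hq'def
  set q := newton u f d 0 with hqdef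
  have hR0 : q' - q - C (dd u' f (d+1) 0) * nb u (d+1) 0 = 0 := by
    set R := q' - q - C (dd u' f (d+1) 0) * nb u (d+1) 0 with hRdef
    have hnbc : (nb u (d+1) 0).coeff (d+1) = 1 := by
      have h := (nb_monic u (d+1) 0).coeff_natDegree
      rwa [nb_natDegree] at h
    have hcoeff : R.coeff (d+1) = 0 := by
      rw [hRdef, coeff_sub, coeff_sub, coeff_C_mul, hnbc,
        coeff_eq_zero_of_natDegree_lt (lt_of_le_of_lt (newton_natDegree_le u f d 0) (by omega)),
        hq'def, newton_coeff_top]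
      ring
    have hle : R.natDegree ≤ d+1 := by
      refine le_trans (natDegree_sub_le _ _) (max_le (le_trans (natDegree_sub_le _ _)
        (max_le (newton_natDegree_le u' f (d+1) 0)
          (le_trans (newton_natDegree_le u f d 0) (by omega)))) ?_)
      exact le_trans (natDegree_C_mul_le _ _) (le_of_eq (nb_natDegree u (d+1) 0))
    have hdeg : R.natDegree ≤ d := by
      rw [natDegree_le_iff_coeff_eq_zero]
      intro m hm
      rcases eq_or_lt_of_le (Nat.succ_le_of_lt hm) with h | h
      · rw [← h]; exact hcoeff
      · exact coeff_eq_zero_of_natDegree_lt (lt_of_le_of_lt hle h)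
    have hev : ∀ j : Fin (d+1), R.eval (u j) = 0 := by
      rintro ⟨j, hj⟩
      have e1 : q.eval (u j) = f (u j) := by
        have := newton_eval hu f d 0 j (by omega)
        rwa [zero_add] at this
      have e2 : q'.eval (u j) = f (u j) := by
        rcases Nat.lt_or_ge j pos with h | h
        · have := newton_eval hu' f (d+1) 0 j (by omega)
          rw [zero_add] at this
          rwa [show u' j = u j from ins_lt h] at this
        · have := newton_eval hu' f (d+1) 0 (j+1) (by omega)
          rwa [zero_add, show u' (j+1) = u j from ins_ge h] at this
      have e3 : (nb u (d+1) 0).eval (u j) = 0 := by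
        rw [nb_eval]
        refine Finset.prod_eq_zero (mem_range.mpr (show j < d+1 by omega)) ?_
        rw [zero_add, sub_self]
      simp [hRdef, e1, e2, e3]
    have hcard : R.natDegree < Fintype.card (Fin (d+1)) := by
      rw [Fintype.card_fin]; omega
    exact eq_zero_of_natDegree_lt_card_of_eval_eq_zero R
      (f := fun j : Fin (d+1) => u j)
      (fun a b hab => Fin.eq_of_val_eq (hu.injective hab)) hev hcard
  have hsplit : q' = q + C (dd u' f (d+1) 0) * nb u (d+1) 0 := by
    linear_combination hR0
  have hx : q'.eval x = f x := by
    have := newton_eval hu' f (d+1) 0 pos hpos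
    rwa [zero_add, show u' pos = x from ins_self u pos x] at this
  have := congrArg (Polynomial.eval x) hsplit
  rw [hx, eval_add, eval_mul, eval_C, nb_eval] at this
  rw [this]
  congr 1
  congr 1
  exact Finset.prod_congr rfl fun j _ => by rw [zero_add]

lemma pfun_append (L1 L2 : List ℝ) (x : ℝ) :
    pfun (L1 ++ L2) x = pfun L1 x * pfun L2 x := by
  simp [pfun]

lemma pfun_map_range (h : ℕ → ℝ) (M : ℕ) (x : ℝ) :
    pfun ((List.range M).map h) x = ∏ r ∈ range M, (h r - x)⁻¹ := by
  induction M with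
  | zero => simp [pfun]
  | succ M ih =>
    rw [List.range_succ, List.map_append, pfun_append, ih, Finset.prod_range_succ]
    simp [pfun]

lemma dd_pfun_pos' (hu : StrictMono u) (L : List ℝ) (hL0 : L ≠ []) (d i : ℕ)
    (hL : ∀ c ∈ L, u (i+d) < c) : 0 < dd u (pfun L) d i := by
  cases L with
  | nil => exact absurd rfl hL0
  | cons c L => exact dd_pfun_pos hu c L d i hL

lemma prod_range_two_mul (h : ℕ → ℝ) (s : ℕ) :
    ∏ i ∈ range (2*s), h i = ∏ j ∈ range s, (h (2*j) * h (2*j+1)) := by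
  induction s with
  | zero => simp
  | succ s ih =>
    rw [show 2*(s+1) = 2*s+1+1 by omega, Finset.prod_range_succ, Finset.prod_range_succ,
      Finset.prod_range_succ, ih]
    ring

/-- The perturbed double-node sequence. -/
noncomputable def basePts (φ g : ℕ → ℝ) (s : ℕ) : ℕ → ℝ := fun i =>
  if i ≤ 2*s then (if i % 2 = 0 then φ (i/2) else g (i/2)) else φ s + ((i - 2*s : ℕ) : ℝ)

lemma basePts_even {φ g : ℕ → ℝ} {s j : ℕ} (h : j ≤ s) : basePts φ g s (2*j) = φ j := by
  have h1 : 2*j ≤ 2*s := by omega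
  have h2 : (2*j) % 2 = 0 := by omega
  have h3 : (2*j) / 2 = j := by omega
  simp [basePts, h1, h2, h3]

lemma basePts_odd {φ g : ℕ → ℝ} {s j : ℕ} (h : j < s) : basePts φ g s (2*j+1) = g j := by
  have h1 : 2*j+1 ≤ 2*s := by omega
  have h2 : ¬ ((2*j+1) % 2 = 0) := by omega
  have h3 : (2*j+1) / 2 = j := by omega
  simp [basePts, h1, h2, h3]

lemma basePts_strictMono {φ g : ℕ → ℝ} {s : ℕ}
    (hφg : ∀ j, j < s → φ j < g j) (hgφ : ∀ j, j < s → g j < φ (j+1)) :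
    StrictMono (basePts φ g s) := by
  apply strictMono_nat_of_lt_succ
  intro i
  rcases Nat.lt_or_ge i (2*s) with hi | hi
  · rcases Nat.even_or_odd i with ⟨j, hj⟩ | ⟨j, hj⟩
    · have e1 : basePts φ g s i = φ j := by
        rw [show i = 2*j by omega]; exact basePts_even (by omega)
      have e2 : basePts φ g s (i+1) = g j := by
        rw [show i+1 = 2*j+1 by omega]; exact basePts_odd (by omega)
      rw [e1, e2]; exact hφg j (by omega)
    · have e1 : basePts φ g s i = g j := by
        rw [show i = 2*j+1 by omega]; exact basePts_odd (by omega)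
      have e2 : basePts φ g s (i+1) = φ (j+1) := by
        rw [show i+1 = 2*(j+1) by omega]; exact basePts_even (by omega)
      rw [e1, e2]; exact hgφ j (by omega)
  · rcases Nat.eq_or_lt_of_le hi with hi' | hi'
    · have e1 : basePts φ g s i = φ s := by
        rw [show i = 2*s by omega]; exact basePts_even le_rfl
      have e2 : basePts φ g s (i+1) = φ s + ((1:ℕ):ℝ) := by
        have h1 : ¬ (i+1 ≤ 2*s) := by omega
        simp only [basePts, h1, if_false]
        rw [show i+1-2*s = 1 by omega]
      rw [e1, e2]; norm_num
    · have e1 : basePts φ g s i = φ s + ((i - 2*s : ℕ) : ℝ) := by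
        have h1 : ¬ (i ≤ 2*s) := by omega
        simp only [basePts, h1, if_false]
      have e2 : basePts φ g s (i+1) = φ s + ((i+1 - 2*s : ℕ) : ℝ) := by
        have h1 : ¬ (i+1 ≤ 2*s) := by omega
        simp only [basePts, h1, if_false]
      rw [e1, e2]
      have : ((i - 2*s : ℕ) : ℝ) < ((i+1 - 2*s : ℕ) : ℝ) := by
        have : (i - 2*s : ℕ) < (i+1 - 2*s : ℕ) := by omega
        exact_mod_cast this
      linarith

/-- Existence of the one-sided majorant polynomial of Chebyshev–Markov–Stieltjes. -/
lemma majorant (K M : ℕ) (hK : 1 ≤ K) (hM : 1 ≤ M) (φ : ℕ → ℝ)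
    (hφ : ∀ i j : ℕ, i < j → j < K + M → φ i < φ j)
    {n : ℕ} (lam : Fin n → ℝ) :
    ∃ p : ℝ[X], p.natDegree ≤ 2*(K+M) - 2
      ∧ (∀ i, i < K → p.eval (φ i) = 1)
      ∧ (∀ i, K ≤ i → i < K + M → p.eval (φ i) = 0)
      ∧ (∀ j : Fin n, lam j ≤ φ (K-1) → 1 ≤ p.eval (lam j))
      ∧ (∀ j : Fin n, 0 ≤ p.eval (lam j))
      ∧ (∀ j : Fin n, φ (K-1) < lam j → lam j < φ K → 0 < p.eval (lam j)) := by
  obtain ⟨s, rfl⟩ : ∃ s, K = s + 1 := ⟨K - 1, by omega⟩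
  have hs : s + 1 - 1 = s := by omega
  rw [hs]
  -- the midpoints g j, j < s
  classical
  set nxt : ℕ → ℝ := fun j =>
    if h : ((Finset.univ.filter (fun i : Fin n => φ j < lam i)).image lam).Nonempty
    then ((Finset.univ.filter (fun i : Fin n => φ j < lam i)).image lam).min' h
    else φ (j+1) with hnxt
  have hnxt1 : ∀ j, j < s → φ j < nxt j := by
    intro j hj
    rw [hnxt]
    dsimp only
    split
    · next h =>
      obtain ⟨i, hi, hval⟩ := Finset.mem_image.mp (Finset.min'_mem _ h)
      rw [← hval]
      exact (Finset.mem_filter.mp hi).2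
    · exact hφ j (j+1) (by omega) (by omega)
  have hnxt2 : ∀ j (i : Fin n), φ j < lam i → nxt j ≤ lam i := by
    intro j i hi
    rw [hnxt]
    dsimp only
    have hne : ((Finset.univ.filter (fun i : Fin n => φ j < lam i)).image lam).Nonempty :=
      ⟨lam i, Finset.mem_image.mpr ⟨i, Finset.mem_filter.mpr ⟨Finset.mem_univ _, hi⟩, rfl⟩⟩
    rw [dif_pos hne]
    exact Finset.min'_le _ _ (Finset.mem_image.mpr ⟨i, Finset.mem_filter.mpr ⟨Finset.mem_univ _, hi⟩, rfl⟩)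
  set g : ℕ → ℝ := fun j => (φ j + min (φ (j+1)) (nxt j)) / 2 with hg
  have hmin : ∀ j, j < s → φ j < min (φ (j+1)) (nxt j) := fun j hj =>
    lt_min (hφ j (j+1) (by omega) (by omega)) (hnxt1 j hj)
  have hg1 : ∀ j, j < s → φ j < g j := by
    intro j hj
    have := hmin j hj
    rw [hg]; dsimp only; linarith
  have hg2 : ∀ j, j < s → g j < φ (j+1) := by
    intro j hj
    have h1 := hφ j (j+1) (by omega) (by omega)
    have h2 : min (φ (j+1)) (nxt j) ≤ φ (j+1) := min_le_left _ _
    rw [hg]; dsimp only; linarith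
  have hg3 : ∀ j, j < s → ∀ i : Fin n, φ j < lam i → g j < lam i := by
    intro j hj i hi
    have h1 := hmin j hj
    have h2 : min (φ (j+1)) (nxt j) ≤ nxt j := min_le_right _ _
    have h3 := hnxt2 j i hi
    rw [hg]; dsimp only; linarith
  -- the base sequence
  set pts : ℕ → ℝ := basePts φ g s with hpts
  have hptsm : StrictMono pts := basePts_strictMono hg1 hg2
  have hpts_even : ∀ j, j ≤ s → pts (2*j) = φ j := fun j hj => basePts_even hj
  have hpts_odd : ∀ j, j < s → pts (2*j+1) = g j := fun j hj => basePts_odd hj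
  have hpts_le : ∀ i, i ≤ 2*s → pts i ≤ φ s := by
    intro i hi
    have := hptsm.monotone hi
    rwa [show pts (2*s) = φ s from hpts_even s le_rfl] at this
  -- the pole list
  set L : List ℝ := ((List.range M).map fun r => φ (s+1+r))
      ++ ((List.range M).map fun r => φ (s+1+r)) with hL
  have hLmem : ∀ c ∈ L, ∃ r, r < M ∧ c = φ (s+1+r) := by
    intro c hc
    rw [hL] at hc
    rcases List.mem_append.mp hc with h | h <;>
    · obtain ⟨r, hr, rfl⟩ := List.mem_map.mp h
      exact ⟨r, List.mem_range.mp hr, rfl⟩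
  have hLlb : ∀ c ∈ L, φ (s+1) ≤ c := by
    intro c hc
    obtain ⟨r, hr, rfl⟩ := hLmem c hc
    rcases Nat.eq_zero_or_pos r with rfl | hr0
    · simp
    · exact le_of_lt (hφ (s+1) (s+1+r) (by omega) (by omega))
  have hLne : L ≠ [] := by
    intro h0
    rw [hL] at h0
    simp at h0
    omega
  have hφs1 : φ s < φ (s+1) := hφ s (s+1) (by omega) (by omega)
  set f : ℝ → ℝ := pfun L with hf
  have hfval : ∀ x, f x = (∏ r ∈ range M, (φ (s+1+r) - x)⁻¹)^2 := by
    intro x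
    rw [hf, hL, pfun_append, pfun_map_range]
    ring
  have hfpos : ∀ x, x < φ (s+1) → 0 < f x := by
    intro x hx
    exact pfun_pos fun c hc => lt_of_lt_of_le hx (hLlb c hc)
  -- the interpolant and the majorant polynomial
  set q : ℝ[X] := newton pts f (2*s) 0 with hq
  set B : ℝ[X] := ∏ r ∈ range M, (X - C (φ (s+1+r))) with hB
  have hBeval : ∀ x, B.eval x = ∏ r ∈ range M, (x - φ (s+1+r)) := by
    intro x; rw [hB, eval_prod]; simp
  set p : ℝ[X] := B^2 * q with hp
  have hub : ∀ r, r < M → φ (s+1) ≤ φ (s+1+r) := by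
    intro r hr
    rcases Nat.eq_zero_or_pos r with rfl | hr0
    · simp
    · exact le_of_lt (hφ (s+1) (s+1+r) (by omega) (by omega))
  have hW : ∀ x, x < φ (s+1) → (B.eval x)^2 * f x = 1 := by
    intro x hx
    rw [hBeval, hfval, ← mul_pow, ← Finset.prod_mul_distrib]
    have e : ∏ r ∈ range M, ((x - φ (s+1+r)) * (φ (s+1+r) - x)⁻¹) = (-1)^M := by
      rw [Finset.prod_congr rfl (fun r hr => ?_), Finset.prod_const]
      · rw [Finset.card_range]
      · have hne : φ (s+1+r) - x ≠ 0 :=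
          sub_ne_zero.2 (ne_of_gt (lt_of_lt_of_le hx (hub r (mem_range.mp hr))))
        rw [show x - φ (s+1+r) = -(φ (s+1+r) - x) by ring, neg_mul,
          mul_inv_cancel₀ hne]
    rw [e, ← pow_mul, mul_comm M 2, pow_mul]
    norm_num
  have hqnode : ∀ i, i ≤ 2*s → q.eval (pts i) = f (pts i) := by
    intro i hi
    have := newton_eval hptsm f (2*s) 0 i hi
    rwa [zero_add] at this
  have hφ0s : φ 0 ≤ φ s := by
    rcases Nat.eq_zero_or_pos s with rfl | hs0
    · exact le_refl _
    · exact le_of_lt (hφ 0 s hs0 (by omega))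
  have hqpos : ∀ x, φ s ≤ x → 0 < q.eval x := by
    intro x hx
    have hqev : q.eval x = ∑ r ∈ range (2*s+1),
        dd pts f r 0 * ∏ ν ∈ range r, (x - pts (0+ν)) := by
      rw [hq, newton, eval_finset_sum]
      exact Finset.sum_congr rfl fun r _ => by rw [eval_mul, eval_C, nb_eval]
    rw [hqev, Finset.sum_range_succ']
    have h0 : 0 < dd pts f 0 0 * ∏ ν ∈ range 0, (x - pts (0+ν)) := by
      rw [dd_zero, Finset.prod_range_zero, mul_one]
      have e0 : pts 0 = φ 0 := by simpa using hpts_even 0 (by omega)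
      rw [e0]
      exact hfpos _ (lt_of_le_of_lt hφ0s hφs1)
    have hrest : 0 ≤ ∑ r ∈ range (2*s), dd pts f (r+1) 0 * ∏ ν ∈ range (r+1), (x - pts (0+ν)) := by
      refine Finset.sum_nonneg fun r hr => mul_nonneg ?_ ?_
      · refine dd_pfun_nonneg hptsm L (r+1) 0 fun c hc => ?_
        exact lt_of_le_of_lt (hpts_le (0+(r+1)) (by have := mem_range.mp hr; omega))
          (lt_of_lt_of_le hφs1 (hLlb c hc))
      · exact Finset.prod_nonneg fun ν hν => sub_nonneg.2
          (le_trans (hpts_le (0+ν)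
            (by have h1 := mem_range.mp hν; have h2 := mem_range.mp hr; omega)) hx)
    linarith
  -- key one-sided estimate at atoms to the left of φ s
  have hkey : ∀ j : Fin n, lam j ≤ φ s → f (lam j) ≤ q.eval (lam j) := by
    intro j hj
    by_cases hbase : ∃ i, i ≤ 2*s ∧ pts i = lam j
    · obtain ⟨i, hi, hie⟩ := hbase
      rw [← hie, hqnode i hi]
    · push_neg at hbase
      have h2s1 : lam j < pts (2*s+1) :=
        lt_of_le_of_lt hj (by rw [← hpts_even s le_rfl]; exact hptsm (by omega))
      have hex : ∃ i, lam j < pts i := ⟨2*s+1, h2s1⟩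
      have hpos_le : Nat.find hex ≤ 2*s+1 := Nat.find_le h2s1
      set pos := Nat.find hex with hposdef
      have h1 : ∀ i, i < pos → pts i < lam j := by
        intro i hi
        have hnlt : ¬ lam j < pts i := Nat.find_min hex hi
        push_neg at hnlt
        exact lt_of_le_of_ne hnlt (hbase i (by omega))
      have h2 : ∀ i, pos ≤ i → lam j < pts i :=
        fun i hi => lt_of_lt_of_le (Nat.find_spec hex) (hptsm.monotone hi)
      have herr := newton_error hptsm f (2*s) (lam j) pos hpos_le h1 h2
      have hSneg : (∏ i ∈ range (2*s+1), (lam j - pts i)) < 0 := by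
        rw [Finset.prod_range_succ]
        have hlast : lam j - pts (2*s) < 0 := by
          rw [hpts_even s le_rfl]
          refine sub_neg.2 (lt_of_le_of_ne hj ?_)
          intro h
          exact (hbase (2*s) (by omega)) (by rw [hpts_even s le_rfl, h])
        have hfront : 0 < ∏ i ∈ range (2*s), (lam j - pts i) := by
          rw [prod_range_two_mul (fun i => lam j - pts i) s]
          refine Finset.prod_pos fun jj hjj => ?_
          have hjs : jj < s := mem_range.mp hjj
          rw [hpts_even jj (by omega), hpts_odd jj hjs]
          rcases lt_trichotomy (lam j) (φ jj) with hlt | heq | hgt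
          · exact mul_pos_of_neg_of_neg (by linarith) (by have := hg1 jj hjs; linarith)
          · exact absurd (by rw [hpts_even jj (by omega)]; exact heq.symm)
              (hbase (2*jj) (by omega))
          · exact mul_pos (by linarith) (by have := hg3 jj hjs j hgt; linarith)
        exact mul_neg_of_pos_of_neg hfront hlast
      have hD : 0 < dd (ins pts pos (lam j)) f (2*s+1) 0 := by
        refine dd_pfun_pos' (ins_strictMono hptsm h1 h2) L hLne (2*s+1) 0 fun c hc => ?_
        have hins : ins pts pos (lam j) (0+(2*s+1)) ≤ φ s := by
          rw [zero_add]
          rcases Nat.lt_or_ge pos (2*s+1) with hpp | hpp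
          · rw [show (2*s+1) = (2*s)+1 from rfl, ins_ge (by omega)]
            exact hpts_le (2*s) le_rfl
          · have hpe : pos = 2*s+1 := by omega
            rw [hpe, ins_self]
            exact hj
        exact lt_of_le_of_lt hins (lt_of_lt_of_le hφs1 (hLlb c hc))
      have hmulneg : dd (ins pts pos (lam j)) f (2*s+1) 0
          * (∏ i ∈ range (2*s+1), (lam j - pts i)) < 0 :=
        mul_neg_of_pos_of_neg hD hSneg
      linarith [herr]
  -- the main pointwise bounds
  have hp1 : ∀ j : Fin n, lam j ≤ φ s → 1 ≤ p.eval (lam j) := by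
    intro j hj
    have h1 := hkey j hj
    have h2 := hW (lam j) (lt_of_le_of_lt hj hφs1)
    calc (1:ℝ) = (B.eval (lam j))^2 * f (lam j) := h2.symm
      _ ≤ (B.eval (lam j))^2 * q.eval (lam j) :=
          mul_le_mul_of_nonneg_left h1 (sq_nonneg _)
      _ = p.eval (lam j) := by rw [hp, eval_mul, eval_pow]
  refine ⟨p, ?_, ?_, ?_, ?_, ?_, ?_⟩
  · -- degree
    have hBdeg : B.natDegree = M := by
      rw [hB, natDegree_prod_of_monic _ _ (fun r _ => monic_X_sub_C _)]
      simp
    have hple : p.natDegree ≤ 2*M + 2*s := by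
      rw [hp]
      refine le_trans (natDegree_mul_le) (add_le_add ?_ (newton_natDegree_le pts f (2*s) 0))
      rw [natDegree_pow, hBdeg]
    omega
  · -- left nodes
    intro i hi
    have hev : q.eval (φ i) = f (φ i) := by
      rw [← hpts_even i (by omega)]
      exact hqnode (2*i) (by omega)
    rw [hp, eval_mul, eval_pow, hev]
    exact hW _ (hφ i (s+1) (by omega) (by omega))
  · -- right nodes
    intro i hKi hiKM
    have hBz : B.eval (φ i) = 0 := by
      rw [hBeval]
      refine Finset.prod_eq_zero (mem_range.mpr (show i - (s+1) < M by omega)) ?_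
      rw [show s+1+(i-(s+1)) = i by omega, sub_self]
    rw [hp, eval_mul, eval_pow, hBz]
    ring
  · exact hp1
  · -- nonnegativity at all atoms
    intro j
    rcases le_or_gt (lam j) (φ s) with hj | hj
    · linarith [hp1 j hj]
    · rw [hp, eval_mul, eval_pow]
      exact mul_nonneg (sq_nonneg _) (le_of_lt (hqpos _ (le_of_lt hj)))
  · -- strict positivity in the gap
    intro j hj1 hj2
    have hBne : B.eval (lam j) ≠ 0 := by
      rw [hBeval]
      exact Finset.prod_ne_zero_iff.mpr fun r hr =>
        sub_ne_zero.2 (ne_of_lt (lt_of_lt_of_le hj2 (hub r (mem_range.mp hr))))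
    rw [hp, eval_mul, eval_pow]
    exact mul_pos (pow_two_pos_of_ne_zero hBne) (hqpos _ (le_of_lt hj1))
end CMS

end CMSAux

/-- Separation Theorem of Chebyshev–Markov–Stieltjes for a discrete
measure: with atoms `lam` (strictly increasing, nonzero weights `‖w j‖²`) in `(a,b)`,
nodes `θ` in `(a,b)` interlaced by atoms, and quadrature exactness of degree `2m−2`,
the accumulated weights `∑_{j≤k} ‖c j‖²` are strictly between `α_n(θ_k)` and
`α_n(θ_{k+1}−)`. -/
theorem stmt_4 {n m : ℕ}
    (lam : Fin n → ℝ) (hlam : StrictMono lam)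
    (w : Fin n → ℂ) (hw : ∀ j, w j ≠ 0)
    (a b : ℝ) (hab : ∀ j, a < lam j ∧ lam j < b)
    (θ : Fin m → ℝ) (hθ : StrictMono θ) (hθab : ∀ k, a < θ k ∧ θ k < b)
    (c : Fin m → ℂ)
    (hinter : ∀ (k : Fin m) (hk : (k : ℕ) + 1 < m),
      ∃ j, θ k < lam j ∧ lam j < θ ⟨(k : ℕ) + 1, hk⟩)
    (hquad : ∀ p : Polynomial ℝ, p.natDegree ≤ 2 * m - 2 →
      ∑ j, ‖w j‖ ^ 2 * p.eval (lam j) = ∑ j, ‖c j‖ ^ 2 * p.eval (θ j)) :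
    ∀ (k : Fin m) (hk : (k : ℕ) + 1 < m),
      (∑ j ∈ Finset.univ.filter fun j => lam j ≤ θ k, ‖w j‖ ^ 2)
          < (∑ j ∈ Finset.univ.filter fun j => j ≤ k, ‖c j‖ ^ 2) ∧
      (∑ j ∈ Finset.univ.filter fun j => j ≤ k, ‖c j‖ ^ 2)
          < ∑ j ∈ Finset.univ.filter fun j => lam j < θ ⟨(k : ℕ) + 1, hk⟩, ‖w j‖ ^ 2 := by
  intro k hk
  have hm2 : 2 ≤ m := by omega
  have hwpos : ∀ j, (0:ℝ) < ‖w j‖ ^ 2 := fun j =>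
    pow_pos (norm_pos_iff.mpr (hw j)) 2
  set φ : ℕ → ℝ := fun i => θ ⟨min i (m-1), by omega⟩ with hφdef
  have hφm : ∀ i : Fin m, φ (i : ℕ) = θ i := by
    intro i
    rw [hφdef]
    have hmin : min (i:ℕ) (m-1) = (i:ℕ) := by have := i.isLt; omega
    have he : (⟨min (i:ℕ) (m-1), by omega⟩ : Fin m) = i := Fin.ext hmin
    exact congrArg θ he
  have hφmono : ∀ i j : ℕ, i < j → j < m → φ i < φ j := by
    intro i j hij hj
    rw [hφdef]
    refine hθ (by rw [Fin.lt_def]; show min i (m-1) < min j (m-1); omega)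
  obtain ⟨jg, hjg1, hjg2⟩ := hinter k hk
  constructor
  · -- LOWER BOUND
    obtain ⟨p, hdeg, hleft, hright, hge1, hge0, hgap⟩ :=
      CMS.majorant ((k:ℕ)+1) (m - (k:ℕ) - 1) (by omega) (by omega) φ
        (fun i j hij hj => hφmono i j hij (by omega)) lam
    have hθkφ : φ ((k:ℕ)+1-1) = θ k := by
      rw [show (k:ℕ)+1-1 = (k:ℕ) by omega]
      exact hφm k
    have hθk1φ : φ ((k:ℕ)+1) = θ ⟨(k:ℕ)+1, hk⟩ := hφm ⟨(k:ℕ)+1, hk⟩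
    have hquadp := hquad p (by omega)
    have hnodesum : ∑ j, ‖c j‖ ^ 2 * p.eval (θ j)
        = ∑ j ∈ Finset.univ.filter fun j => j ≤ k, ‖c j‖ ^ 2 := by
      rw [← Finset.sum_filter_add_sum_filter_not Finset.univ (fun j => j ≤ k)
        (fun j => ‖c j‖ ^ 2 * p.eval (θ j))]
      have e2 : ∑ j ∈ Finset.univ.filter (fun j : Fin m => ¬ j ≤ k),
          ‖c j‖ ^ 2 * p.eval (θ j) = 0 := by
        refine Finset.sum_eq_zero fun j hj => ?_
        have hjk : (k:ℕ) < (j:ℕ) :=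
          Fin.lt_def.mp (lt_of_not_ge (Finset.mem_filter.mp hj).2)
        have h := hright (j:ℕ) (by omega) (by omega)
        rw [hφm j] at h
        rw [h, mul_zero]
      have e1 : ∑ j ∈ Finset.univ.filter (fun j : Fin m => j ≤ k),
          ‖c j‖ ^ 2 * p.eval (θ j)
          = ∑ j ∈ Finset.univ.filter (fun j : Fin m => j ≤ k), ‖c j‖ ^ 2 := by
        refine Finset.sum_congr rfl fun j hj => ?_
        have hjk : (j:ℕ) ≤ (k:ℕ) := Fin.le_def.mp (Finset.mem_filter.mp hj).2
        have h := hleft (j:ℕ) (by omega)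
        rw [hφm j] at h
        rw [h, mul_one]
      rw [e1, e2, add_zero]
    have hatom : (∑ j ∈ Finset.univ.filter fun j => lam j ≤ θ k, ‖w j‖ ^ 2)
        < ∑ j, ‖w j‖ ^ 2 * p.eval (lam j) := by
      rw [← Finset.sum_filter_add_sum_filter_not Finset.univ (fun j => lam j ≤ θ k)
        (fun j => ‖w j‖ ^ 2 * p.eval (lam j))]
      have b1 : ∑ j ∈ Finset.univ.filter (fun j => lam j ≤ θ k), ‖w j‖ ^ 2
          ≤ ∑ j ∈ Finset.univ.filter (fun j => lam j ≤ θ k),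
              ‖w j‖ ^ 2 * p.eval (lam j) := by
        refine Finset.sum_le_sum fun j hj => ?_
        have h := (Finset.mem_filter.mp hj).2
        have h1 := hge1 j (by rw [hθkφ]; exact h)
        nlinarith [hwpos j]
      have b2 : 0 < ∑ j ∈ Finset.univ.filter (fun j => ¬ lam j ≤ θ k),
          ‖w j‖ ^ 2 * p.eval (lam j) := by
        have hmem : jg ∈ Finset.univ.filter (fun j => ¬ lam j ≤ θ k) :=
          Finset.mem_filter.mpr ⟨Finset.mem_univ _, not_le.mpr hjg1⟩
        refine lt_of_lt_of_le ?_
          (Finset.single_le_sum (f := fun j => ‖w j‖ ^ 2 * p.eval (lam j))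
            (fun j _ => mul_nonneg (le_of_lt (hwpos j)) (hge0 j)) hmem)
        have hg := hgap jg (by rw [hθkφ]; exact hjg1) (by rw [hθk1φ]; exact hjg2)
        exact mul_pos (hwpos jg) hg
      linarith
    calc (∑ j ∈ Finset.univ.filter fun j => lam j ≤ θ k, ‖w j‖ ^ 2)
        < ∑ j, ‖w j‖ ^ 2 * p.eval (lam j) := hatom
      _ = ∑ j, ‖c j‖ ^ 2 * p.eval (θ j) := hquadp
      _ = _ := hnodesum
  · -- UPPER BOUND
    obtain ⟨P, hdeg, hleft, hright, hge1, hge0, hgap⟩ :=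
      CMS.majorant (m-(k:ℕ)-1) ((k:ℕ)+1) (by omega) (by omega) (fun i => -φ (m-1-i))
        (fun i j hij hj => by
          rw [neg_lt_neg_iff]
          exact hφmono (m-1-j) (m-1-i) (by omega) (by omega)) (fun j => -lam j)
    set pt : Polynomial ℝ := Polynomial.C 1 - P.comp (-Polynomial.X) with hpt
    have hptev : ∀ x : ℝ, pt.eval x = 1 - P.eval (-x) := by
      intro x
      rw [hpt]
      simp [eval_comp]
    have hdeg' : pt.natDegree ≤ 2*m-2 := by
      rw [hpt]
      refine le_trans (natDegree_sub_le _ _) (max_le (by simp) ?_)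
      rw [natDegree_comp]
      have h1 : (-(Polynomial.X : Polynomial ℝ)).natDegree = 1 := by
        rw [natDegree_neg, natDegree_X]
      rw [h1, mul_one]
      omega
    have hKm : m-(k:ℕ)-1-1 = m-(k:ℕ)-2 := by omega
    have hφ'1 : -φ (m-1-(m-(k:ℕ)-1-1)) = -θ ⟨(k:ℕ)+1, hk⟩ := by
      rw [show m-1-(m-(k:ℕ)-1-1) = (k:ℕ)+1 by omega, hφm ⟨(k:ℕ)+1, hk⟩]
    have hφ'2 : -φ (m-1-(m-(k:ℕ)-1)) = -θ k := by
      rw [show m-1-(m-(k:ℕ)-1) = (k:ℕ) by omega, hφm k]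
    -- node values of pt
    have hnode1 : ∀ j : Fin m, (j:ℕ) ≤ (k:ℕ) → pt.eval (θ j) = 1 := by
      intro j hj
      have h := hright (m-1-(j:ℕ)) (by omega) (by omega)
      rw [show m-1-(m-1-(j:ℕ)) = (j:ℕ) by omega, hφm j] at h
      rw [hptev, h]
      norm_num
    have hnode0 : ∀ j : Fin m, (k:ℕ) < (j:ℕ) → pt.eval (θ j) = 0 := by
      intro j hj
      have h := hleft (m-1-(j:ℕ)) (by omega)
      rw [show m-1-(m-1-(j:ℕ)) = (j:ℕ) by omega, hφm j] at h
      rw [hptev, h]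
      norm_num
    -- atom values
    have hA1 : ∀ j, θ ⟨(k:ℕ)+1, hk⟩ ≤ lam j → pt.eval (lam j) ≤ 0 := by
      intro j hj
      have h := hge1 j (by rw [hφ'1]; exact neg_le_neg hj)
      rw [hptev]
      linarith
    have hA2 : ∀ j, pt.eval (lam j) ≤ 1 := by
      intro j
      have h := hge0 j
      rw [hptev]
      linarith
    have hA3 : pt.eval (lam jg) < 1 := by
      have h := hgap jg (by rw [hφ'1]; exact neg_lt_neg hjg2)
        (by rw [hφ'2]; exact neg_lt_neg hjg1)
      rw [hptev]
      linarith
    have hquadp := hquad pt hdeg'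
    have hnodesum : ∑ j, ‖c j‖ ^ 2 * pt.eval (θ j)
        = ∑ j ∈ Finset.univ.filter fun j => j ≤ k, ‖c j‖ ^ 2 := by
      rw [← Finset.sum_filter_add_sum_filter_not Finset.univ (fun j => j ≤ k)
        (fun j => ‖c j‖ ^ 2 * pt.eval (θ j))]
      have e2 : ∑ j ∈ Finset.univ.filter (fun j : Fin m => ¬ j ≤ k),
          ‖c j‖ ^ 2 * pt.eval (θ j) = 0 := by
        refine Finset.sum_eq_zero fun j hj => ?_
        rw [hnode0 j (Fin.lt_def.mp (lt_of_not_ge (Finset.mem_filter.mp hj).2)), mul_zero]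
      have e1 : ∑ j ∈ Finset.univ.filter (fun j : Fin m => j ≤ k),
          ‖c j‖ ^ 2 * pt.eval (θ j)
          = ∑ j ∈ Finset.univ.filter (fun j : Fin m => j ≤ k), ‖c j‖ ^ 2 := by
        refine Finset.sum_congr rfl fun j hj => ?_
        rw [hnode1 j (Fin.le_def.mp (Finset.mem_filter.mp hj).2), mul_one]
      rw [e1, e2, add_zero]
    have hatom : ∑ j, ‖w j‖ ^ 2 * pt.eval (lam j)
        < ∑ j ∈ Finset.univ.filter fun j => lam j < θ ⟨(k:ℕ)+1, hk⟩, ‖w j‖ ^ 2 := by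
      rw [← Finset.sum_filter_add_sum_filter_not Finset.univ
        (fun j => lam j < θ ⟨(k:ℕ)+1, hk⟩) (fun j => ‖w j‖ ^ 2 * pt.eval (lam j))]
      have b2 : ∑ j ∈ Finset.univ.filter (fun j => ¬ lam j < θ ⟨(k:ℕ)+1, hk⟩),
          ‖w j‖ ^ 2 * pt.eval (lam j) ≤ 0 := by
        refine Finset.sum_nonpos fun j hj => ?_
        have h := hA1 j (not_lt.mp (Finset.mem_filter.mp hj).2)
        nlinarith [hwpos j]
      have b1 : ∑ j ∈ Finset.univ.filter (fun j => lam j < θ ⟨(k:ℕ)+1, hk⟩),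
          ‖w j‖ ^ 2 * pt.eval (lam j)
          < ∑ j ∈ Finset.univ.filter (fun j => lam j < θ ⟨(k:ℕ)+1, hk⟩), ‖w j‖ ^ 2 := by
        have hmem : jg ∈ Finset.univ.filter (fun j => lam j < θ ⟨(k:ℕ)+1, hk⟩) :=
          Finset.mem_filter.mpr ⟨Finset.mem_univ _, hjg2⟩
        have hdiff : 0 < ∑ j ∈ Finset.univ.filter (fun j => lam j < θ ⟨(k:ℕ)+1, hk⟩),
            ‖w j‖ ^ 2 * (1 - pt.eval (lam j)) := by
          refine lt_of_lt_of_le (mul_pos (hwpos jg) (by linarith [hA3]))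
            (Finset.single_le_sum (f := fun j => ‖w j‖ ^ 2 * (1 - pt.eval (lam j)))
              (fun j _ => mul_nonneg (le_of_lt (hwpos j)) (by linarith [hA2 j])) hmem)
        have hsub : ∑ j ∈ Finset.univ.filter (fun j => lam j < θ ⟨(k:ℕ)+1, hk⟩),
            ‖w j‖ ^ 2 * (1 - pt.eval (lam j))
            = (∑ j ∈ Finset.univ.filter (fun j => lam j < θ ⟨(k:ℕ)+1, hk⟩), ‖w j‖ ^ 2)
              - ∑ j ∈ Finset.univ.filter (fun j => lam j < θ ⟨(k:ℕ)+1, hk⟩),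
                  ‖w j‖ ^ 2 * pt.eval (lam j) := by
          rw [← Finset.sum_sub_distrib]
          exact Finset.sum_congr rfl fun j _ => by ring
        linarith
      linarith
    calc (∑ j ∈ Finset.univ.filter fun j => j ≤ k, ‖c j‖ ^ 2)
        = ∑ j, ‖c j‖ ^ 2 * pt.eval (θ j) := hnodesum.symm
      _ = ∑ j, ‖w j‖ ^ 2 * pt.eval (lam j) := hquadp.symm
      _ < _ := hatom
end

section
/- Under the hypotheses of the CMS separation theorem (quadrature exactness for polynomials of degree ≤ 2m−2 plus interlacing of nodes with atoms), for indices 1 < j < k < m one has μ_n([θ_j, θ_k]) < |c_j|² + |c_{j+1}|² + ... + |c_k|² < μ_n((θ_{j−1}, θ_{k+1})), where μ_n(R) = ∑_{i: λ_i ∈ R} |w_i|². -/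
open Polynomial

lemma sq_dvd_of_root_deriv {p : ℝ[X]} {a : ℝ} (h1 : p.eval a = 0)
    (h2 : p.derivative.eval a = 0) : (X - C a) ^ 2 ∣ p := by
  obtain ⟨q, hq⟩ := dvd_iff_isRoot.mpr h1
  have hq' : p.derivative = q + (X - C a) * q.derivative := by
    rw [hq, derivative_mul]
    simp [derivative_sub]
  have hqa : q.eval a = 0 := by
    have := h2
    rw [hq'] at this
    simpa using this
  obtain ⟨r, hr⟩ := dvd_iff_isRoot.mpr hqa
  exact ⟨r, by rw [hq, hr]; ring⟩

lemma hermite_exists (S : Finset ℝ) (e : ℝ) (he : e ∉ S) (f : ℝ → ℝ) (ve : ℝ) :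
    ∃ H : ℝ[X], H.natDegree ≤ 2 * S.card ∧ H.eval e = ve ∧
      ∀ s ∈ S, H.eval s = f s ∧ H.derivative.eval s = 0 := by
  classical
  set d := 2 * S.card + 1 with hd
  let Φ : degreeLT ℝ d →ₗ[ℝ] ((S → ℝ) × (S → ℝ) × ℝ) :=
    { toFun := fun p => (fun s => (p : ℝ[X]).eval s.1,
        fun s => (derivative (p : ℝ[X])).eval s.1, (p : ℝ[X]).eval e)
      map_add' := by intro p q; ext <;> simp
      map_smul' := by intro c p; ext <;> simp }
  have hinj : Function.Injective Φ := by
    intro p q hpq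
    ext1
    by_contra hne
    set r : ℝ[X] := (p : ℝ[X]) - (q : ℝ[X]) with hr
    have hrne : r ≠ 0 := sub_ne_zero.mpr hne
    have hre : r.eval e = 0 := by
      have := congrArg (fun z => z.2.2) hpq
      simp only [Φ, LinearMap.coe_mk, AddHom.coe_mk] at this
      simp [hr, eval_sub, this]
    have hrs : ∀ s ∈ S, r.eval s = 0 ∧ r.derivative.eval s = 0 := by
      intro s hs
      have h1 := congrArg (fun z => z.1 ⟨s, hs⟩) hpq
      have h2 := congrArg (fun z => z.2.1 ⟨s, hs⟩) hpq
      simp only [Φ, LinearMap.coe_mk, AddHom.coe_mk] at h1 h2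
      constructor
      · simp [hr, eval_sub, h1]
      · simp [hr, derivative_sub, eval_sub, h1, h2]
    -- divisibility
    have hcop : (↑S : Set ℝ).Pairwise (Function.onFun IsCoprime fun a : ℝ => (X - C a) ^ 2) := by
      intro a _ b _ hab
      have base : IsCoprime ((X : ℝ[X]) - C a) (X - C b) :=
        Polynomial.pairwise_coprime_X_sub_C (Function.injective_id) hab
      exact base.pow
    have hdvd1 : (∏ s ∈ S, (X - C s) ^ 2) ∣ r :=
      Finset.prod_dvd_of_coprime hcop (fun s hs => sq_dvd_of_root_deriv (hrs s hs).1 (hrs s hs).2)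
    have hdvd2 : (X - C e) ∣ r := dvd_iff_isRoot.mpr hre
    have hcop2 : IsCoprime (X - C e) (∏ s ∈ S, (X - C s) ^ 2) := by
      apply IsCoprime.prod_right
      intro s hs
      have hne2 : e ≠ s := fun h => he (h ▸ hs)
      have base : IsCoprime ((X : ℝ[X]) - C e) (X - C s) :=
        Polynomial.pairwise_coprime_X_sub_C (Function.injective_id) hne2
      have := base.pow (m := 1) (n := 2)
      simpa using this
    have hdvd : ((X - C e) * ∏ s ∈ S, (X - C s) ^ 2) ∣ r := hcop2.mul_dvd hdvd2 hdvd1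
    have hQne : ∀ s ∈ S, ((X : ℝ[X]) - C s) ^ 2 ≠ 0 := fun s _ =>
      pow_ne_zero _ (X_sub_C_ne_zero s)
    have hprodne : (∏ s ∈ S, ((X : ℝ[X]) - C s) ^ 2) ≠ 0 :=
      Finset.prod_ne_zero_iff.mpr hQne
    have hdegQ : ((X - C e) * ∏ s ∈ S, (X - C s) ^ 2).natDegree = d := by
      rw [natDegree_mul (X_sub_C_ne_zero e) hprodne, natDegree_X_sub_C,
        natDegree_prod _ _ hQne]
      have hnd : ∀ s ∈ S, (((X : ℝ[X]) - C s) ^ 2).natDegree = 2 := by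
        intro s _; rw [natDegree_pow, natDegree_X_sub_C]
      rw [Finset.sum_congr rfl hnd, Finset.sum_const, smul_eq_mul, hd]
      ring
    have hlt : r.natDegree < d := by
      have := p.2
      have hq2 := q.2
      rw [Polynomial.mem_degreeLT] at this hq2
      have : r.degree < (d : ℕ∞) := lt_of_le_of_lt (degree_sub_le _ _) (max_lt this hq2)
      exact (Polynomial.natDegree_lt_iff_degree_lt hrne).mpr this
    have := Polynomial.natDegree_le_of_dvd hdvd hrne
    omega
  haveI : FiniteDimensional ℝ (degreeLT ℝ d) :=
    Module.Finite.equiv (Polynomial.degreeLTEquiv ℝ d).symm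
  have hfr : Module.finrank ℝ (degreeLT ℝ d) = Module.finrank ℝ ((S → ℝ) × (S → ℝ) × ℝ) := by
    rw [(Polynomial.degreeLTEquiv ℝ d).finrank_eq]
    simp only [Module.finrank_fintype_fun_eq_card, Module.finrank_prod,
      Module.finrank_self, Fintype.card_coe, Fintype.card_fin, hd]
    omega
  have hsurj : Function.Surjective Φ :=
    (LinearMap.injective_iff_surjective_of_finrank_eq_finrank hfr).mp hinj
  obtain ⟨p, hp⟩ := hsurj (fun s => f s.1, fun _ => 0, ve)
  refine ⟨(p : ℝ[X]), ?_, ?_, ?_⟩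
  · rcases eq_or_ne (p : ℝ[X]) 0 with h | h
    · simp [h]
    · have := p.2
      rw [Polynomial.mem_degreeLT] at this
      have := (Polynomial.natDegree_lt_iff_degree_lt h).mpr this
      omega
  · have := congrArg (fun z => z.2.2) hp
    simpa [Φ, LinearMap.coe_mk, AddHom.coe_mk] using this
  · intro s hs
    have h1 := congrArg (fun z => z.1 ⟨s, hs⟩) hp
    have h2 := congrArg (fun z => z.2.1 ⟨s, hs⟩) hp
    simp only [Φ, LinearMap.coe_mk, AddHom.coe_mk] at h1 h2
    exact ⟨h1, h2⟩

lemma exists_H (N t : ℕ) (x : ℕ → ℝ) (hx : ∀ i j, i < j → j < N → x i < x j)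
    (ht : t + 1 < N) :
    ∃ H : ℝ[X], H.natDegree ≤ 2 * N - 2 ∧
      (∀ i, i ≤ t → H.eval (x i) = 1) ∧
      (∀ i, t < i → i < N → H.eval (x i) = 0) ∧
      (∀ y, y ≤ x t → 1 ≤ H.eval y) ∧
      (∀ y, 0 ≤ H.eval y) ∧
      (∀ y, x t < y → y < x (t + 1) → 0 < H.eval y) := by
  classical
  set S : Finset ℝ := (Finset.range t).image x ∪ (Finset.Ico (t+1) N).image x with hS
  have hmemS : ∀ s, s ∈ S ↔ ∃ i, i < N ∧ i ≠ t ∧ x i = s := by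
    intro s
    simp only [hS, Finset.mem_union, Finset.mem_image, Finset.mem_range, Finset.mem_Ico]
    constructor
    · rintro (⟨i, hi, rfl⟩ | ⟨i, ⟨hi1, hi2⟩, rfl⟩)
      · exact ⟨i, by omega, by omega, rfl⟩
      · exact ⟨i, by omega, by omega, rfl⟩
    · rintro ⟨i, hi1, hi2, rfl⟩
      rcases lt_or_gt_of_ne hi2 with h | h
      · exact Or.inl ⟨i, h, rfl⟩
      · exact Or.inr ⟨i, ⟨by omega, hi1⟩, rfl⟩
  have he : x t ∉ S := by
    rw [hmemS]
    rintro ⟨i, hi1, hi2, hieq⟩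
    rcases lt_or_gt_of_ne hi2 with h | h
    · exact absurd hieq (ne_of_lt (hx i t h (by omega)))
    · exact absurd hieq (ne_of_gt (hx t i h hi1))
  have hcardS : S.card = N - 1 := by
    rw [hS, Finset.card_union_of_disjoint, Finset.card_image_of_injOn,
      Finset.card_image_of_injOn]
    · rw [Finset.card_range, Nat.card_Ico]; omega
    · intro i hi j hj hij
      simp only [Finset.coe_Ico, Set.mem_Ico] at hi hj
      by_contra hne
      rcases lt_or_gt_of_ne hne with h | h
      · exact absurd hij (ne_of_lt (hx i j h hj.2))
      · exact absurd hij (ne_of_gt (hx j i h hi.2))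
    · intro i hi j hj hij
      simp only [Finset.coe_range, Set.mem_Iio] at hi hj
      by_contra hne
      rcases lt_or_gt_of_ne hne with h | h
      · exact absurd hij (ne_of_lt (hx i j h (by omega)))
      · exact absurd hij (ne_of_gt (hx j i h (by omega)))
    · rw [Finset.disjoint_left]
      rintro a ha hb
      simp only [Finset.mem_image, Finset.mem_range, Finset.mem_Ico] at ha hb
      obtain ⟨i, hi, rfl⟩ := ha
      obtain ⟨j, ⟨hj1, hj2⟩, hj3⟩ := hb
      have h1 : x i < x t := hx i t hi (by omega)
      have h2 : x t < x j := hx t j (by omega) hj2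
      linarith [h1, h2, hj3.symm ▸ h1]
  obtain ⟨H, hdeg, hevale, hevalS⟩ :=
    hermite_exists S (x t) he (fun y => if y < x t then (1:ℝ) else 0) 1
  have hdeg' : H.natDegree ≤ 2 * N - 2 := by rw [hcardS] at hdeg; omega
  have hval1 : ∀ i, i ≤ t → H.eval (x i) = 1 := by
    intro i hi
    rcases eq_or_lt_of_le hi with rfl | hi'
    · exact hevale
    · have hmem : x i ∈ S := (hmemS _).mpr ⟨i, by omega, by omega, rfl⟩
      rw [(hevalS _ hmem).1, if_pos (hx i t hi' (by omega))]
  have hval0 : ∀ i, t < i → i < N → H.eval (x i) = 0 := by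
    intro i hi1 hi2
    have hmem : x i ∈ S := (hmemS _).mpr ⟨i, hi2, by omega, rfl⟩
    rw [(hevalS _ hmem).1, if_neg (not_lt.mpr (hx t i hi1 hi2).le)]
  set D := derivative H with hD
  have hder : ∀ i, i < N → i ≠ t → D.eval (x i) = 0 := by
    intro i hi1 hi2
    exact (hevalS _ ((hmemS _).mpr ⟨i, hi1, hi2, rfl⟩)).2
  have hndH : H.natDegree ≠ 0 := by
    intro h0
    obtain ⟨a, ha⟩ := Polynomial.natDegree_eq_zero.mp h0
    have e1 : H.eval (x t) = 1 := hval1 t le_rfl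
    have e2 : H.eval (x (t+1)) = 0 := hval0 (t+1) (by omega) ht
    rw [← ha] at e1 e2; simp at e1 e2; rw [e1] at e2; norm_num at e2
  have hDne : D ≠ 0 := by
    intro h0
    exact hndH (Polynomial.natDegree_eq_zero_of_derivative_eq_zero h0)
  have hndD : D.natDegree ≤ 2 * N - 3 := by
    have := Polynomial.natDegree_derivative_lt hndH
    rw [← hD] at this
    omega
  -- Rolle
  have rolle : ∀ a b : ℝ, a < b → H.eval a = H.eval b →
      ∃ cc, (a < cc ∧ cc < b) ∧ D.eval cc = 0 := by
    intro a b hab hval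
    obtain ⟨cc, hcc, hdcc⟩ := exists_deriv_eq_zero hab (Polynomial.continuousOn H) hval
    refine ⟨cc, ⟨hcc.1, hcc.2⟩, ?_⟩
    rwa [Polynomial.deriv] at hdcc
  obtain ⟨ξ, hξ⟩ : ∃ ξ : ℕ → ℝ, ∀ i, i < t →
      ((x i < ξ i ∧ ξ i < x (i+1)) ∧ D.eval (ξ i) = 0) := by
    have hxi : ∀ i, i < t → ∃ cc, ((x i < cc ∧ cc < x (i+1)) ∧ D.eval cc = 0) := by
      intro i hi
      exact rolle (x i) (x (i+1)) (hx i (i+1) (by omega) (by omega))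
        (by rw [hval1 i (by omega), hval1 (i+1) (by omega)])
    exact ⟨fun i => if h : i < t then (hxi i h).choose else 0,
      fun i h => by beta_reduce; rw [dif_pos h]; exact (hxi i h).choose_spec⟩
  obtain ⟨ζ, hζ⟩ : ∃ ζ : ℕ → ℝ, ∀ q, t < q → q + 1 < N →
      ((x q < ζ q ∧ ζ q < x (q+1)) ∧ D.eval (ζ q) = 0) := by
    have hzi : ∀ q, t < q → q + 1 < N → ∃ cc, ((x q < cc ∧ cc < x (q+1)) ∧ D.eval cc = 0) := by
      intro q h1 h2
      exact rolle (x q) (x (q+1)) (hx q (q+1) (by omega) h2)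
        (by rw [hval0 q h1 (by omega), hval0 (q+1) (by omega) h2])
    exact ⟨fun q => if h : t < q ∧ q + 1 < N then (hzi q h.1 h.2).choose else 0,
      fun q h1 h2 => by beta_reduce; rw [dif_pos (show t < q ∧ q + 1 < N from ⟨h1, h2⟩)]; exact (hzi q h1 h2).choose_spec⟩
  set K := 2 * N - 3 with hK
  set z : ℕ → ℝ := fun k => if k < 2*t then (if Even k then x (k/2) else ξ (k/2))
      else (if Even k then x (k/2 + 1) else ζ (k/2 + 1)) with hz
  have E1 : ∀ i, i < t → z (2*i) = x i := by
    intro i hi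
    simp only [hz]
    rw [if_pos (by omega), if_pos (even_two_mul i), Nat.mul_div_cancel_left i (by norm_num)]
  have E2 : ∀ i, i < t → z (2*i+1) = ξ i := by
    intro i hi
    simp only [hz]
    rw [if_pos (by omega), if_neg (by simp [Nat.even_add_one, parity_simps])]
    congr 1
    omega
  have E3 : ∀ j, t ≤ j → z (2*j) = x (j+1) := by
    intro j hj
    simp only [hz]
    rw [if_neg (by omega), if_pos (even_two_mul j)]
    congr 1
    omega
  have E4 : ∀ j, t ≤ j → z (2*j+1) = ζ (j+1) := by
    intro j hj
    simp only [hz]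
    rw [if_neg (by omega), if_neg (by simp [Nat.even_add_one, parity_simps])]
    congr 1
    omega
  -- roots
  have zroot : ∀ k, k < K → D.eval (z k) = 0 := by
    intro k hk
    rcases Nat.even_or_odd k with ⟨j, hj⟩ | ⟨j, hj⟩
    · subst hj
      rcases lt_or_ge j t with h | h
      · rw [show j + j = 2*j by ring, E1 j h]
        exact hder j (by omega) (by omega)
      · rw [show j + j = 2*j by ring, E3 j h]
        exact hder (j+1) (by omega) (by omega)
    · subst hj
      rcases lt_or_ge j t with h | h
      · rw [show 2*j+1 = 2*j+1 by rfl, E2 j h]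
        exact (hξ j h).2
      · rw [E4 j h]
        exact (hζ (j+1) (by omega) (by omega)).2
  -- adjacent monotonicity
  have zadj : ∀ k, k + 1 < K → z k < z (k+1) := by
    intro k hk
    rcases Nat.even_or_odd k with ⟨j, hj⟩ | ⟨j, hj⟩
    · have hjj : k = 2*j := by omega
      subst hjj
      rcases lt_or_ge j t with h | h
      · rw [E1 j h, E2 j h]
        exact (hξ j (by omega)).1.1
      · rw [E3 j h, E4 j h]
        exact (hζ (j+1) (by omega) (by omega)).1.1
    · have hjj : k = 2*j + 1 := by omega
      subst hjj
      rcases lt_or_ge j t with h | h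
      · rw [E2 j h]
        have h2 : z (2*j+1+1) = z (2*(j+1)) := by congr 1 <;> omega
        rcases lt_or_ge (j+1) t with h3 | h3
        · rw [h2, E1 (j+1) h3]
          exact (hξ j h).1.2
        · rw [h2, E3 (j+1) h3]
          exact lt_trans (hξ j h).1.2 (hx (j+1) (j+2) (by omega) (by omega))
      · rw [E4 j h]
        have h2 : z (2*j+1+1) = z (2*(j+1)) := by congr 1 <;> omega
        rw [h2, E3 (j+1) (by omega)]
        exact (hζ (j+1) (by omega) (by omega)).1.2
  have zmono : ∀ k l, k < l → l < K → z k < z l := by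
    intro k l
    induction l with
    | zero => omega
    | succ l ih =>
      intro hkl hlK
      rcases Nat.lt_or_ge k l with h | h
      · exact lt_trans (ih h (by omega)) (zadj l hlK)
      · have : k = l := by omega
        subst this
        exact zadj k hlK
  have zle : ∀ k l, k ≤ l → l < K → z k ≤ z l := by
    intro k l hkl hl
    rcases eq_or_lt_of_le hkl with rfl | h
    · exact le_rfl
    · exact (zmono k l h hl).le
  -- factorization of D
  have hKpos : 0 < K := by omega
  have hzinj : ∀ k l, k < K → l < K → z k = z l → k = l := by
    intro k l hk hl hkl
    by_contra hne
    rcases Nat.lt_or_ge k l with h | h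
    · exact absurd hkl (ne_of_lt (zmono k l h hl))
    · exact absurd hkl (ne_of_gt (zmono l k (by omega) hk))
  have hdvdP : (∏ k ∈ Finset.range K, (X - C (z k))) ∣ D := by
    apply Finset.prod_dvd_of_coprime
    · intro k hk l hl hkl
      simp only [Finset.coe_range, Set.mem_Iio] at hk hl
      exact Polynomial.pairwise_coprime_X_sub_C (Function.injective_id)
        (show z k ≠ z l from fun h => hkl (hzinj k l hk hl h))
    · intro k hk
      simp only [Finset.mem_range] at hk
      exact dvd_iff_isRoot.mpr (zroot k hk)
  obtain ⟨Q, hQ⟩ := hdvdP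
  have hPne : (∏ k ∈ Finset.range K, ((X:ℝ[X]) - C (z k))) ≠ 0 :=
    Finset.prod_ne_zero_iff.mpr (fun k _ => X_sub_C_ne_zero (z k))
  have hPdeg : (∏ k ∈ Finset.range K, ((X:ℝ[X]) - C (z k))).natDegree = K := by
    rw [natDegree_prod _ _ (fun k _ => X_sub_C_ne_zero (z k))]
    simp [natDegree_X_sub_C]
  have hQne : Q ≠ 0 := by
    intro h0; rw [h0, mul_zero] at hQ; exact hDne hQ
  have hQdeg : Q.natDegree = 0 := by
    have := Polynomial.natDegree_mul hPne hQne
    rw [← hQ, hPdeg] at this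
    omega
  obtain ⟨c₀, hc₀⟩ := Polynomial.natDegree_eq_zero.mp hQdeg
  have hc₀ne : c₀ ≠ 0 := by
    intro h0; rw [h0, map_zero] at hc₀; rw [← hc₀, mul_zero] at hQ; exact hDne hQ
  have evalD : ∀ y : ℝ, D.eval y = c₀ * ∏ k ∈ Finset.range K, (y - z k) := by
    intro y
    rw [hQ, ← hc₀]
    simp [eval_prod, mul_comm]
  -- sign of products
  have prodsign : ∀ (jj : ℕ) (y : ℝ), jj ≤ K → (∀ k, k < jj → z k < y) →
      (∀ k, jj ≤ k → k < K → y < z k) →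
      ∃ Cp : ℝ, 0 < Cp ∧ (∏ k ∈ Finset.range K, (y - z k)) = (-1)^(K - jj) * Cp := by
    intro jj y hjj hlow hhigh
    have hsplit := Finset.prod_range_mul_prod_Ico (fun k => (y - z k)) hjj
    have h1 : 0 < ∏ k ∈ Finset.range jj, (y - z k) :=
      Finset.prod_pos (fun k hk => by
        simp only [Finset.mem_range] at hk
        have := hlow k hk; linarith)
    have h2 : (∏ k ∈ Finset.Ico jj K, (y - z k)) =
        (-1)^(K - jj) * ∏ k ∈ Finset.Ico jj K, (z k - y) := by
      rw [← Nat.card_Ico jj K, ← Finset.prod_const, ← Finset.prod_mul_distrib]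
      exact Finset.prod_congr rfl (fun k _ => by ring)
    have h3 : 0 < ∏ k ∈ Finset.Ico jj K, (z k - y) :=
      Finset.prod_pos (fun k hk => by
        simp only [Finset.mem_Ico] at hk
        have := hhigh k hk.1 hk.2; linarith)
    refine ⟨(∏ k ∈ Finset.range jj, (y - z k)) * ∏ k ∈ Finset.Ico jj K, (z k - y),
      mul_pos h1 h3, ?_⟩
    rw [← hsplit, h2]
    ring
  -- bounds for the central gap
  have zlow_gap : ∀ k, k < 2*t → z k < x t := by
    intro k hk
    rcases Nat.even_or_odd k with ⟨j, hj⟩ | ⟨j, hj⟩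
    · have : k = 2*j := by omega
      subst this
      rw [E1 j (by omega)]
      exact hx j t (by omega) (by omega)
    · have : k = 2*j+1 := by omega
      subst this
      rw [E2 j (by omega)]
      calc ξ j < x (j+1) := (hξ j (by omega)).1.2
        _ ≤ x t := by
          rcases eq_or_lt_of_le (show j + 1 ≤ t by omega) with h | h
          · rw [h]
          · exact (hx (j+1) t h (by omega)).le
  have zhigh_gap : ∀ k, 2*t ≤ k → k < K → x (t+1) ≤ z k := by
    intro k hk hkK
    rcases Nat.even_or_odd k with ⟨j, hj⟩ | ⟨j, hj⟩
    · have : k = 2*j := by omega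
      subst this
      rw [E3 j (by omega)]
      rcases eq_or_lt_of_le (show t + 1 ≤ j + 1 by omega) with h | h
      · rw [← h]
      · exact (hx (t+1) (j+1) h (by omega)).le
    · have : k = 2*j+1 := by omega
      subst this
      rw [E4 j (by omega)]
      calc x (t+1) ≤ x (j+1) := by
            rcases eq_or_lt_of_le (show t + 1 ≤ j + 1 by omega) with h | h
            · rw [h]
            · exact (hx (t+1) (j+1) h (by omega)).le
        _ ≤ ζ (j+1) := ((hζ (j+1) (by omega) (by omega)).1.1).le
  -- monotonicity helpers
  have SM : ∀ a b : ℝ, (∀ y, a < y → y < b → 0 < D.eval y) →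
      StrictMonoOn (fun y => H.eval y) (Set.Icc a b) := by
    intro a b hD'
    apply strictMonoOn_of_deriv_pos (convex_Icc a b) (Polynomial.continuousOn H)
    intro y hy
    rw [interior_Icc] at hy
    rw [Polynomial.deriv, ← hD]
    exact hD' y hy.1 hy.2
  have SA : ∀ a b : ℝ, (∀ y, a < y → y < b → D.eval y < 0) →
      StrictAntiOn (fun y => H.eval y) (Set.Icc a b) := by
    intro a b hD'
    apply strictAntiOn_of_deriv_neg (convex_Icc a b) (Polynomial.continuousOn H)
    intro y hy
    rw [interior_Icc] at hy
    rw [Polynomial.deriv, ← hD]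
    exact hD' y hy.1 hy.2
  -- sign of the leading constant
  have hgap : ∀ y, x t < y → y < x (t+1) →
      ∃ Cp : ℝ, 0 < Cp ∧ D.eval y = c₀ * (-1) * Cp := by
    intro y h1 h2
    obtain ⟨Cp, hCp, hprod⟩ := prodsign (2*t) y (by omega)
      (fun k hk => lt_trans (zlow_gap k hk) h1)
      (fun k hk1 hk2 => lt_of_lt_of_le h2 (zhigh_gap k hk1 hk2))
    refine ⟨Cp, hCp, ?_⟩
    rw [evalD, hprod, Odd.neg_one_pow ⟨N - t - 2, by omega⟩]
    ring
  have hc₀pos : 0 < c₀ := by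
    rcases lt_trichotomy c₀ 0 with h | h | h
    · exfalso
      have hDgap : ∀ y, x t < y → y < x (t+1) → 0 < D.eval y := by
        intro y h1 h2
        obtain ⟨Cp, hCp, heq⟩ := hgap y h1 h2
        rw [heq]; nlinarith
      have hxlt : x t < x (t+1) := hx t (t+1) (by omega) ht
      have := SM (x t) (x (t+1)) hDgap (Set.left_mem_Icc.mpr hxlt.le)
        (Set.right_mem_Icc.mpr hxlt.le) hxlt
      simp only [] at this
      rw [hval1 t le_rfl, hval0 (t+1) (by omega) ht] at this
      linarith
    · exact absurd h hc₀ne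
    · exact h
  have Dpos : ∀ (jj : ℕ) (y : ℝ), jj ≤ K → Even (K - jj) → (∀ k, k < jj → z k < y) →
      (∀ k, jj ≤ k → k < K → y < z k) → 0 < D.eval y := by
    intro jj y hjj hev hlow hhigh
    obtain ⟨Cp, hCp, hprod⟩ := prodsign jj y hjj hlow hhigh
    rw [evalD, hprod, Even.neg_one_pow hev]
    nlinarith
  have Dneg : ∀ (jj : ℕ) (y : ℝ), jj ≤ K → Odd (K - jj) → (∀ k, k < jj → z k < y) →
      (∀ k, jj ≤ k → k < K → y < z k) → D.eval y < 0 := by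
    intro jj y hjj hodd hlow hhigh
    obtain ⟨Cp, hCp, hprod⟩ := prodsign jj y hjj hlow hhigh
    rw [evalD, hprod, Odd.neg_one_pow hodd]
    nlinarith
  -- region sign facts
  have R1 : ∀ i, i < t → ∀ y, x i < y → y < ξ i → 0 < D.eval y := by
    intro i hi y h1 h2
    apply Dpos (2*i+1) y (by omega) ⟨N - i - 2, by omega⟩
    · intro k hk
      calc z k ≤ z (2*i) := zle k (2*i) (by omega) (by omega)
        _ = x i := E1 i hi
        _ < y := h1
    · intro k hk1 hk2
      calc y < ξ i := h2
        _ = z (2*i+1) := (E2 i hi).symm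
        _ ≤ z k := zle (2*i+1) k hk1 hk2
  have R2 : ∀ i, i < t → ∀ y, ξ i < y → y < x (i+1) → D.eval y < 0 := by
    intro i hi y h1 h2
    have hnext : x (i+1) ≤ z (2*(i+1)) := by
      rcases Nat.lt_or_ge (i+1) t with h | h
      · rw [E1 (i+1) h]
      · have : i + 1 = t := by omega
        rw [E3 (i+1) h]
        exact (hx (i+1) (i+2) (by omega) (by omega)).le
    apply Dneg (2*i+2) y (by omega) ⟨N - i - 3, by omega⟩
    · intro k hk
      calc z k ≤ z (2*i+1) := zle k (2*i+1) (by omega) (by omega)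
        _ = ξ i := E2 i hi
        _ < y := h1
    · intro k hk1 hk2
      calc y < x (i+1) := h2
        _ ≤ z (2*(i+1)) := hnext
        _ ≤ z k := zle (2*(i+1)) k (by omega) hk2
  have Rleft : ∀ y, y < x 0 → D.eval y < 0 := by
    intro y h1
    have hz0 : x 0 ≤ z 0 := by
      rcases Nat.eq_zero_or_pos t with h | h
      · have := E3 0 (by omega)
        rw [show 2*0 = 0 by ring] at this
        rw [this]
        exact (hx 0 1 (by omega) (by omega)).le
      · have := E1 0 h
        rw [show 2*0 = 0 by ring] at this
        rw [this]
    apply Dneg 0 y (by omega) ⟨N - 2, by omega⟩ (by omega)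
    intro k _ hk2
    calc y < x 0 := h1
      _ ≤ z 0 := hz0
      _ ≤ z k := zle 0 k (by omega) hk2
  have Rgap : ∀ y, x t < y → y < x (t+1) → D.eval y < 0 := by
    intro y h1 h2
    obtain ⟨Cp, hCp, heq⟩ := hgap y h1 h2
    rw [heq]; nlinarith
  have R3 : ∀ j, t ≤ j → j + 2 < N → ∀ y, x (j+1) < y → y < ζ (j+1) → 0 < D.eval y := by
    intro j hj hjN y h1 h2
    apply Dpos (2*j+1) y (by omega) ⟨N - j - 2, by omega⟩
    · intro k hk
      calc z k ≤ z (2*j) := zle k (2*j) (by omega) (by omega)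
        _ = x (j+1) := E3 j hj
        _ < y := h1
    · intro k hk1 hk2
      calc y < ζ (j+1) := h2
        _ = z (2*j+1) := (E4 j hj).symm
        _ ≤ z k := zle (2*j+1) k hk1 hk2
  have R4 : ∀ j, t ≤ j → j + 2 < N → ∀ y, ζ (j+1) < y → y < x (j+2) → D.eval y < 0 := by
    intro j hj hjN y h1 h2
    apply Dneg (2*j+2) y (by omega) ⟨N - j - 3, by omega⟩
    · intro k hk
      calc z k ≤ z (2*j+1) := zle k (2*j+1) (by omega) (by omega)
        _ = ζ (j+1) := E4 j hj
        _ < y := h1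
    · intro k hk1 hk2
      have : z (2*(j+1)) = x (j+2) := E3 (j+1) (by omega)
      calc y < x (j+2) := h2
        _ = z (2*(j+1)) := this.symm
        _ ≤ z k := zle (2*(j+1)) k (by omega) hk2
  have Rright : ∀ y, x (N-1) < y → 0 < D.eval y := by
    intro y h1
    have hzlast : z (2*(N-2)) = x (N-1) := by
      have := E3 (N-2) (by omega)
      rw [show N - 2 + 1 = N - 1 by omega] at this
      exact this
    apply Dpos K y le_rfl (by simp) ?_ (by omega)
    intro k hk
    calc z k ≤ z (2*(N-2)) := zle k (2*(N-2)) (by omega) (by omega)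
      _ = x (N-1) := hzlast
      _ < y := h1
  -- main pointwise bounds
  have PA : ∀ y, y ≤ x t → 1 ≤ H.eval y := by
    suffices h : ∀ i, i ≤ t → ∀ y, y ≤ x i → 1 ≤ H.eval y from fun y hy => h t le_rfl y hy
    intro i
    induction i with
    | zero =>
      intro _ y hy
      rcases eq_or_lt_of_le hy with rfl | h
      · rw [hval1 0 (by omega)]
      · have h2 := SA y (x 0) (fun y' _ hy2 => Rleft y' hy2)
          (Set.left_mem_Icc.mpr h.le) (Set.right_mem_Icc.mpr h.le) h
        simp only [] at h2
        rw [hval1 0 (by omega)] at h2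
        linarith
    | succ i ih =>
      intro hi y hy
      rcases le_or_gt y (x i) with h | h
      · exact ih (by omega) y h
      · have hit : i < t := by omega
        rcases le_or_gt y (ξ i) with h2 | h2
        · have := SM (x i) (ξ i) (R1 i hit)
            (Set.left_mem_Icc.mpr (hξ i hit).1.1.le) ⟨h.le, h2⟩ h
          simp only [] at this
          rw [hval1 i (by omega)] at this
          linarith
        · rcases eq_or_lt_of_le hy with rfl | h3
          · rw [hval1 (i+1) hi]
          · have := SA (ξ i) (x (i+1)) (R2 i hit)
              ⟨h2.le, hy⟩ (Set.right_mem_Icc.mpr (hξ i hit).1.2.le) h3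
            simp only [] at this
            rw [hval1 (i+1) hi] at this
            linarith
  have PC : ∀ y, x t < y → y < x (t+1) → 0 < H.eval y := by
    intro y h1 h2
    have := SA (x t) (x (t+1)) Rgap ⟨h1.le, h2.le⟩
      (Set.right_mem_Icc.mpr (hx t (t+1) (by omega) ht).le) h2
    simp only [] at this
    rw [hval0 (t+1) (by omega) ht] at this
    linarith
  have seg : ∀ q, t + 1 ≤ q → q < N → ∀ y, x t < y → y ≤ x q → 0 ≤ H.eval y := by
    intro q hq
    induction q, hq using Nat.le_induction with
    | base =>
      intro _ y h1 h2
      rcases eq_or_lt_of_le h2 with rfl | h3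
      · rw [hval0 (t+1) (by omega) ht]
      · exact (PC y h1 h3).le
    | succ q hq ih =>
      intro hN y h1 h2
      rcases le_or_gt y (x q) with h3 | h3
      · exact ih (by omega) y h1 h3
      · have hj : q - 1 + 1 = q := by omega
        have hj2 : q - 1 + 2 = q + 1 := by omega
        have hζq := hζ q (by omega) (by omega)
        rcases le_or_gt y (ζ q) with h4 | h4
        · have := SM (x q) (ζ q) (fun y' a b => by
              exact R3 (q-1) (by omega) (by omega) y' (by rwa [hj]) (by rwa [hj]))
            (Set.left_mem_Icc.mpr hζq.1.1.le) ⟨h3.le, h4⟩ h3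
          simp only [] at this
          rw [hval0 q (by omega) (by omega)] at this
          linarith
        · rcases eq_or_lt_of_le h2 with rfl | h5
          · rw [hval0 (q+1) (by omega) hN]
          · have := SA (ζ q) (x (q+1)) (fun y' a b => by
                exact R4 (q-1) (by omega) (by omega) y' (by rwa [hj]) (by rwa [hj2]))
              ⟨h4.le, h2⟩ (Set.right_mem_Icc.mpr hζq.1.2.le) h5
            simp only [] at this
            rw [hval0 (q+1) (by omega) hN] at this
            linarith
  have PB : ∀ y, 0 ≤ H.eval y := by
    intro y
    rcases le_or_gt y (x t) with h | h
    · linarith [PA y h]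
    · rcases le_or_gt y (x (N-1)) with h2 | h2
      · exact seg (N-1) (by omega) (by omega) y h h2
      · have := SM (x (N-1)) (y+1) (fun y' a _ => Rright y' a)
          (Set.left_mem_Icc.mpr (by linarith)) ⟨h2.le, by linarith⟩ h2
        simp only [] at this
        rw [hval0 (N-1) (by omega) (by omega)] at this
        linarith
  exact ⟨H, hdeg', hval1, hval0, PA, PB, PC⟩

lemma exists_H' (N t : ℕ) (x : ℕ → ℝ) (hx : ∀ i j, i < j → j < N → x i < x j)
    (ht0 : 0 < t) (htN : t < N) :
    ∃ H : ℝ[X], H.natDegree ≤ 2 * N - 2 ∧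
      (∀ i, i < t → H.eval (x i) = 0) ∧
      (∀ i, t ≤ i → i < N → H.eval (x i) = 1) ∧
      (∀ y, x t ≤ y → 1 ≤ H.eval y) ∧
      (∀ y, 0 ≤ H.eval y) ∧
      (∀ y, x (t - 1) < y → y < x t → 0 < H.eval y) := by
  obtain ⟨H₀, hdeg, hv1, hv0, hA, hB, hC⟩ := exists_H N (N - 1 - t)
    (fun i => - x (N - 1 - i))
    (fun i j hij hj => by
      have := hx (N-1-j) (N-1-i) (by omega) (by omega)
      simp only [neg_lt_neg_iff]
      exact this) (by omega)
  beta_reduce at hv1 hv0 hA hB hC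
  have hcomp : ∀ y : ℝ, (H₀.comp (-X)).eval y = H₀.eval (-y) := by
    intro y; simp [eval_comp]
  refine ⟨H₀.comp (-X), ?_, ?_, ?_, ?_, ?_, ?_⟩
  · calc (H₀.comp (-X)).natDegree ≤ H₀.natDegree * (-X : ℝ[X]).natDegree :=
        natDegree_comp_le
      _ ≤ 2 * N - 2 := by
        rw [natDegree_neg, natDegree_X, mul_one]; exact hdeg
  · intro i hi
    rw [hcomp]
    have h := hv0 (N-1-i) (by omega) (by omega)
    rwa [show N-1-(N-1-i) = i by omega] at h
  · intro i hi hiN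
    rw [hcomp]
    have h := hv1 (N-1-i) (by omega)
    rwa [show N-1-(N-1-i) = i by omega] at h
  · intro y hy
    rw [hcomp]
    apply hA
    rw [show N-1-(N-1-t) = t by omega]
    linarith
  · intro y
    rw [hcomp]
    exact hB (-y)
  · intro y h1 h2
    rw [hcomp]
    apply hC (-y)
    · rw [show N-1-(N-1-t) = t by omega]
      linarith
    · rw [show N-1-(N-1-t+1) = t-1 by omega]
      linarith

lemma cms_upper {n m : ℕ}
    (lam : Fin n → ℝ) (w : Fin n → ℂ) (hw : ∀ i, w i ≠ 0)
    (θ : Fin m → ℝ) (hθ : StrictMono θ) (c : Fin m → ℂ)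
    (hinter : ∀ (k : Fin m) (hk : (k : ℕ) + 1 < m),
      ∃ i, θ k < lam i ∧ lam i < θ ⟨(k : ℕ) + 1, hk⟩)
    (hquad : ∀ p : Polynomial ℝ, p.natDegree ≤ 2 * m - 2 →
      ∑ i, ‖w i‖ ^ 2 * p.eval (lam i) = ∑ i, ‖c i‖ ^ 2 * p.eval (θ i))
    (l : ℕ) (hl : l + 1 < m) :
    (∑ i ∈ Finset.univ.filter fun i => lam i ≤ θ ⟨l, by omega⟩, ‖w i‖ ^ 2)
      < ∑ i ∈ Finset.univ.filter fun i : Fin m => (i : ℕ) ≤ l, ‖c i‖ ^ 2 := by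
  classical
  set x : ℕ → ℝ := fun i => if h : i < m then θ ⟨i, h⟩ else 0 with hxdef
  have hx : ∀ i j, i < j → j < m → x i < x j := by
    intro i j hij hj
    simp only [hxdef, dif_pos hj, dif_pos (show i < m by omega)]
    exact hθ (show (⟨i, by omega⟩ : Fin m) < ⟨j, hj⟩ from hij)
  have hxθ : ∀ i : Fin m, x (i : ℕ) = θ i := by
    intro i
    simp only [hxdef, dif_pos i.isLt, Fin.eta]
  obtain ⟨H, hdeg, hv1, hv0, hA, hB, hC⟩ := exists_H m l x hx hl
  have hquadH := hquad H hdeg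
  -- RHS evaluation
  have hrhs : ∑ i, ‖c i‖ ^ 2 * H.eval (θ i)
      = ∑ i ∈ Finset.univ.filter fun i : Fin m => (i : ℕ) ≤ l, ‖c i‖ ^ 2 := by
    rw [← Finset.sum_filter_add_sum_filter_not Finset.univ (fun i : Fin m => (i : ℕ) ≤ l)]
    have h1 : ∀ i ∈ Finset.univ.filter fun i : Fin m => (i : ℕ) ≤ l,
        ‖c i‖ ^ 2 * H.eval (θ i) = ‖c i‖ ^ 2 := by
      intro i hi
      simp only [Finset.mem_filter] at hi
      rw [← hxθ i, hv1 _ hi.2, mul_one]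
    have h2 : ∀ i ∈ Finset.univ.filter fun i : Fin m => ¬((i : ℕ) ≤ l),
        ‖c i‖ ^ 2 * H.eval (θ i) = 0 := by
      intro i hi
      simp only [Finset.mem_filter, not_le] at hi
      rw [← hxθ i, hv0 _ hi.2 i.isLt, mul_zero]
    rw [Finset.sum_congr rfl h1, Finset.sum_congr rfl h2, Finset.sum_const_zero, add_zero]
  -- LHS bound
  obtain ⟨i₀, hi₀1, hi₀2⟩ := hinter ⟨l, by omega⟩ (by simpa using hl)
  have hxl : x l = θ ⟨l, by omega⟩ := by simp only [hxdef, dif_pos (show l < m by omega)]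
  have hxl1 : x (l + 1) = θ ⟨l + 1, hl⟩ := by simp only [hxdef, dif_pos hl]
  have key : (∑ i ∈ Finset.univ.filter fun i => lam i ≤ θ ⟨l, by omega⟩, ‖w i‖ ^ 2)
      < ∑ i, ‖w i‖ ^ 2 * H.eval (lam i) := by
    rw [← Finset.sum_filter_add_sum_filter_not Finset.univ
      (fun i => lam i ≤ θ ⟨l, by omega⟩) (fun i => ‖w i‖ ^ 2 * H.eval (lam i))]
    have hb1 : (∑ i ∈ Finset.univ.filter fun i => lam i ≤ θ ⟨l, by omega⟩, ‖w i‖ ^ 2)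
        ≤ ∑ i ∈ Finset.univ.filter fun i => lam i ≤ θ ⟨l, by omega⟩,
            ‖w i‖ ^ 2 * H.eval (lam i) := by
      apply Finset.sum_le_sum
      intro i hi
      simp only [Finset.mem_filter] at hi
      have h1 : 1 ≤ H.eval (lam i) := hA _ (by rw [hxl]; exact hi.2)
      nlinarith [sq_nonneg ‖w i‖]
    have hb2 : 0 < ∑ i ∈ Finset.univ.filter fun i => ¬(lam i ≤ θ ⟨l, by omega⟩),
        ‖w i‖ ^ 2 * H.eval (lam i) := by
      apply Finset.sum_pos'
      · intro i _
        exact mul_nonneg (by positivity) (hB (lam i))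
      · refine ⟨i₀, ?_, ?_⟩
        · simp only [Finset.mem_filter, not_le]
          exact ⟨Finset.mem_univ _, hi₀1⟩
        · have hw0 : 0 < ‖w i₀‖ ^ 2 := pow_pos (norm_pos_iff.mpr (hw i₀)) 2
          have hH0 : 0 < H.eval (lam i₀) :=
            hC _ (by rw [hxl]; exact hi₀1) (by rw [hxl1]; exact hi₀2)
          exact mul_pos hw0 hH0
    linarith
  calc (∑ i ∈ Finset.univ.filter fun i => lam i ≤ θ ⟨l, by omega⟩, ‖w i‖ ^ 2)
      < ∑ i, ‖w i‖ ^ 2 * H.eval (lam i) := key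
    _ = ∑ i, ‖c i‖ ^ 2 * H.eval (θ i) := hquadH
    _ = _ := hrhs

lemma cms_lower {n m : ℕ}
    (lam : Fin n → ℝ) (w : Fin n → ℂ) (hw : ∀ i, w i ≠ 0)
    (θ : Fin m → ℝ) (hθ : StrictMono θ) (c : Fin m → ℂ)
    (hinter : ∀ (k : Fin m) (hk : (k : ℕ) + 1 < m),
      ∃ i, θ k < lam i ∧ lam i < θ ⟨(k : ℕ) + 1, hk⟩)
    (hquad : ∀ p : Polynomial ℝ, p.natDegree ≤ 2 * m - 2 →
      ∑ i, ‖w i‖ ^ 2 * p.eval (lam i) = ∑ i, ‖c i‖ ^ 2 * p.eval (θ i))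
    (l : ℕ) (hl0 : 0 < l) (hl : l < m) :
    (∑ i ∈ Finset.univ.filter fun i => θ ⟨l, hl⟩ ≤ lam i, ‖w i‖ ^ 2)
      < ∑ i ∈ Finset.univ.filter fun i : Fin m => l ≤ (i : ℕ), ‖c i‖ ^ 2 := by
  classical
  set x : ℕ → ℝ := fun i => if h : i < m then θ ⟨i, h⟩ else 0 with hxdef
  have hx : ∀ i j, i < j → j < m → x i < x j := by
    intro i j hij hj
    simp only [hxdef, dif_pos hj, dif_pos (show i < m by omega)]
    exact hθ (show (⟨i, by omega⟩ : Fin m) < ⟨j, hj⟩ from hij)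
  have hxθ : ∀ i : Fin m, x (i : ℕ) = θ i := by
    intro i
    simp only [hxdef, dif_pos i.isLt, Fin.eta]
  obtain ⟨H, hdeg, hv0, hv1, hA, hB, hC⟩ := exists_H' m l x hx hl0 hl
  have hquadH := hquad H hdeg
  have hrhs : ∑ i, ‖c i‖ ^ 2 * H.eval (θ i)
      = ∑ i ∈ Finset.univ.filter fun i : Fin m => l ≤ (i : ℕ), ‖c i‖ ^ 2 := by
    rw [← Finset.sum_filter_add_sum_filter_not Finset.univ (fun i : Fin m => l ≤ (i : ℕ))]
    have h1 : ∀ i ∈ Finset.univ.filter fun i : Fin m => l ≤ (i : ℕ),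
        ‖c i‖ ^ 2 * H.eval (θ i) = ‖c i‖ ^ 2 := by
      intro i hi
      simp only [Finset.mem_filter] at hi
      rw [← hxθ i, hv1 _ hi.2 i.isLt, mul_one]
    have h2 : ∀ i ∈ Finset.univ.filter fun i : Fin m => ¬(l ≤ (i : ℕ)),
        ‖c i‖ ^ 2 * H.eval (θ i) = 0 := by
      intro i hi
      simp only [Finset.mem_filter, not_le] at hi
      rw [← hxθ i, hv0 _ hi.2, mul_zero]
    rw [Finset.sum_congr rfl h1, Finset.sum_congr rfl h2, Finset.sum_const_zero, add_zero]
  obtain ⟨i₀, hi₀1, hi₀2⟩ := hinter ⟨l - 1, by omega⟩ (by simp only []; omega)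
  have hi₀2' : lam i₀ < θ ⟨l, hl⟩ := by
    have : (⟨(l:ℕ) - 1 + 1, by omega⟩ : Fin m) = ⟨l, hl⟩ := by
      apply Fin.ext; simp; omega
    rw [← this]
    convert hi₀2 using 3
  have hxl : x l = θ ⟨l, hl⟩ := by simp only [hxdef, dif_pos hl]
  have hxl1 : x (l - 1) = θ ⟨l - 1, by omega⟩ := by
    simp only [hxdef, dif_pos (show l - 1 < m by omega)]
  have key : (∑ i ∈ Finset.univ.filter fun i => θ ⟨l, hl⟩ ≤ lam i, ‖w i‖ ^ 2)
      < ∑ i, ‖w i‖ ^ 2 * H.eval (lam i) := by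
    rw [← Finset.sum_filter_add_sum_filter_not Finset.univ
      (fun i => θ ⟨l, hl⟩ ≤ lam i) (fun i => ‖w i‖ ^ 2 * H.eval (lam i))]
    have hb1 : (∑ i ∈ Finset.univ.filter fun i => θ ⟨l, hl⟩ ≤ lam i, ‖w i‖ ^ 2)
        ≤ ∑ i ∈ Finset.univ.filter fun i => θ ⟨l, hl⟩ ≤ lam i,
            ‖w i‖ ^ 2 * H.eval (lam i) := by
      apply Finset.sum_le_sum
      intro i hi
      simp only [Finset.mem_filter] at hi
      have h1 : 1 ≤ H.eval (lam i) := hA _ (by rw [hxl]; exact hi.2)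
      nlinarith [sq_nonneg ‖w i‖]
    have hb2 : 0 < ∑ i ∈ Finset.univ.filter fun i => ¬(θ ⟨l, hl⟩ ≤ lam i),
        ‖w i‖ ^ 2 * H.eval (lam i) := by
      apply Finset.sum_pos'
      · intro i _
        exact mul_nonneg (by positivity) (hB (lam i))
      · refine ⟨i₀, ?_, ?_⟩
        · simp only [Finset.mem_filter, not_le]
          exact ⟨Finset.mem_univ _, hi₀2'⟩
        · have hw0 : 0 < ‖w i₀‖ ^ 2 := pow_pos (norm_pos_iff.mpr (hw i₀)) 2
          have hH0 : 0 < H.eval (lam i₀) :=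
            hC _ (by rw [hxl1]; exact hi₀1) (by rw [hxl]; exact hi₀2')
          exact mul_pos hw0 hH0
    linarith
  calc (∑ i ∈ Finset.univ.filter fun i => θ ⟨l, hl⟩ ≤ lam i, ‖w i‖ ^ 2)
      < ∑ i, ‖w i‖ ^ 2 * H.eval (lam i) := key
    _ = ∑ i, ‖c i‖ ^ 2 * H.eval (θ i) := hquadH
    _ = _ := hrhs

/-- Under the CMS hypotheses (quadrature exactness of degree `2m−2` and
interlacing of nodes with atoms), for `1 < j < k < m` one has
`μ_n([θ_j, θ_k]) < ∑_{i=j}^k ‖c i‖² < μ_n((θ_{j−1}, θ_{k+1}))`. -/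
theorem stmt_5 {n m : ℕ}
    (lam : Fin n → ℝ) (hlam : StrictMono lam)
    (w : Fin n → ℂ) (hw : ∀ i, w i ≠ 0)
    (θ : Fin m → ℝ) (hθ : StrictMono θ)
    (c : Fin m → ℂ)
    (hinter : ∀ (k : Fin m) (hk : (k : ℕ) + 1 < m),
      ∃ i, θ k < lam i ∧ lam i < θ ⟨(k : ℕ) + 1, hk⟩)
    (hquad : ∀ p : Polynomial ℝ, p.natDegree ≤ 2 * m - 2 →
      ∑ i, ‖w i‖ ^ 2 * p.eval (lam i) = ∑ i, ‖c i‖ ^ 2 * p.eval (θ i)) :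
    ∀ (j k : Fin m), 0 < (j : ℕ) → j < k → ∀ hk : (k : ℕ) + 1 < m,
      (∑ i ∈ Finset.univ.filter fun i => θ j ≤ lam i ∧ lam i ≤ θ k, ‖w i‖ ^ 2)
          < (∑ i ∈ Finset.univ.filter fun i => j ≤ i ∧ i ≤ k, ‖c i‖ ^ 2) ∧
      (∑ i ∈ Finset.univ.filter fun i => j ≤ i ∧ i ≤ k, ‖c i‖ ^ 2)
          < ∑ i ∈ Finset.univ.filter fun i =>
              θ ⟨(j : ℕ) - 1, lt_of_le_of_lt (Nat.sub_le _ _) j.isLt⟩ < lam i ∧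
                lam i < θ ⟨(k : ℕ) + 1, hk⟩, ‖w i‖ ^ 2 := by
  intro j k hj0 hjk hk1
  have hjkn : (j : ℕ) < (k : ℕ) := hjk
  have T : ∑ i, ‖w i‖ ^ 2 = ∑ i, ‖c i‖ ^ 2 := by
    have := hquad 1 (by simp)
    simpa using this
  -- part 1 ingredients
  have A : (∑ i ∈ Finset.univ.filter fun i => lam i ≤ θ k, ‖w i‖ ^ 2)
      < ∑ i ∈ Finset.univ.filter fun i : Fin m => (i : ℕ) ≤ (k : ℕ), ‖c i‖ ^ 2 :=
    cms_upper lam w hw θ hθ c hinter hquad (k : ℕ) hk1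
  have B : (∑ i ∈ Finset.univ.filter fun i => θ j ≤ lam i, ‖w i‖ ^ 2)
      < ∑ i ∈ Finset.univ.filter fun i : Fin m => (j : ℕ) ≤ (i : ℕ), ‖c i‖ ^ 2 :=
    cms_lower lam w hw θ hθ c hinter hquad (j : ℕ) hj0 j.isLt
  have hθjk : θ j ≤ θ k := (hθ hjk).le
  have Ew : (∑ i ∈ Finset.univ.filter fun i => θ j ≤ lam i ∧ lam i ≤ θ k, ‖w i‖ ^ 2)
      + ∑ i, ‖w i‖ ^ 2
      = (∑ i ∈ Finset.univ.filter fun i => lam i ≤ θ k, ‖w i‖ ^ 2)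
      + ∑ i ∈ Finset.univ.filter fun i => θ j ≤ lam i, ‖w i‖ ^ 2 := by
    classical
    rw [Finset.sum_filter, Finset.sum_filter, Finset.sum_filter,
      ← Finset.sum_add_distrib, ← Finset.sum_add_distrib]
    refine Finset.sum_congr rfl fun i _ => ?_
    rcases le_or_gt (θ j) (lam i) with h1 | h1 <;> rcases le_or_gt (lam i) (θ k) with h2 | h2
    · simp [h1, h2]
    · simp [h1, not_le.mpr h2]
    · simp [not_le.mpr h1, h2]
    · exfalso; linarith
  have Ec : (∑ i ∈ Finset.univ.filter fun i => j ≤ i ∧ i ≤ k, ‖c i‖ ^ 2)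
      + ∑ i, ‖c i‖ ^ 2
      = (∑ i ∈ Finset.univ.filter fun i : Fin m => (i : ℕ) ≤ (k : ℕ), ‖c i‖ ^ 2)
      + ∑ i ∈ Finset.univ.filter fun i : Fin m => (j : ℕ) ≤ (i : ℕ), ‖c i‖ ^ 2 := by
    classical
    rw [Finset.sum_filter, Finset.sum_filter, Finset.sum_filter,
      ← Finset.sum_add_distrib, ← Finset.sum_add_distrib]
    refine Finset.sum_congr rfl fun i _ => ?_
    simp only [Fin.le_def]
    rcases le_or_gt ((j : ℕ)) ((i : ℕ)) with h1 | h1 <;>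
      rcases le_or_gt ((i : ℕ)) ((k : ℕ)) with h2 | h2
    · simp [h1, h2]
    · simp [h1, not_le.mpr h2]
    · simp [not_le.mpr h1, h2]
    · exfalso; omega
  constructor
  · linarith
  -- part 2
  · have C : (∑ i ∈ Finset.univ.filter fun i =>
        lam i ≤ θ ⟨(j : ℕ) - 1, lt_of_le_of_lt (Nat.sub_le _ _) j.isLt⟩, ‖w i‖ ^ 2)
        < ∑ i ∈ Finset.univ.filter fun i : Fin m => (i : ℕ) ≤ (j : ℕ) - 1, ‖c i‖ ^ 2 :=
      cms_upper lam w hw θ hθ c hinter hquad ((j : ℕ) - 1) (by omega)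
    have D : (∑ i ∈ Finset.univ.filter fun i => θ ⟨(k : ℕ) + 1, hk1⟩ ≤ lam i, ‖w i‖ ^ 2)
        < ∑ i ∈ Finset.univ.filter fun i : Fin m => (k : ℕ) + 1 ≤ (i : ℕ), ‖c i‖ ^ 2 :=
      cms_lower lam w hw θ hθ c hinter hquad ((k : ℕ) + 1) (by omega) hk1
    have hθlt : θ ⟨(j : ℕ) - 1, lt_of_le_of_lt (Nat.sub_le _ _) j.isLt⟩
        < θ ⟨(k : ℕ) + 1, hk1⟩ := hθ (show ((j:ℕ) - 1) < (k:ℕ) + 1 by omega)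
    have Ew2 : (∑ i ∈ Finset.univ.filter fun i =>
          θ ⟨(j : ℕ) - 1, lt_of_le_of_lt (Nat.sub_le _ _) j.isLt⟩ < lam i ∧
            lam i < θ ⟨(k : ℕ) + 1, hk1⟩, ‖w i‖ ^ 2)
        + ((∑ i ∈ Finset.univ.filter fun i =>
            lam i ≤ θ ⟨(j : ℕ) - 1, lt_of_le_of_lt (Nat.sub_le _ _) j.isLt⟩, ‖w i‖ ^ 2)
          + ∑ i ∈ Finset.univ.filter fun i => θ ⟨(k : ℕ) + 1, hk1⟩ ≤ lam i, ‖w i‖ ^ 2)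
        = ∑ i, ‖w i‖ ^ 2 := by
      classical
      rw [Finset.sum_filter, Finset.sum_filter, Finset.sum_filter,
        ← Finset.sum_add_distrib, ← Finset.sum_add_distrib]
      refine Finset.sum_congr rfl fun i _ => ?_
      rcases le_or_gt (lam i) (θ ⟨(j : ℕ) - 1, lt_of_le_of_lt (Nat.sub_le _ _) j.isLt⟩)
        with h1 | h1 <;>
        rcases le_or_gt (θ ⟨(k : ℕ) + 1, hk1⟩) (lam i) with h2 | h2
      · exfalso; linarith
      · simp [h1, not_lt.mpr h1, not_le.mpr h2]
      · simp [not_le.mpr h1, h2, not_lt.mpr h2, h1]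
      · simp [not_le.mpr h1, h1, h2, not_le.mpr h2]
    have Ec2 : (∑ i ∈ Finset.univ.filter fun i => j ≤ i ∧ i ≤ k, ‖c i‖ ^ 2)
        + ((∑ i ∈ Finset.univ.filter fun i : Fin m => (i : ℕ) ≤ (j : ℕ) - 1, ‖c i‖ ^ 2)
          + ∑ i ∈ Finset.univ.filter fun i : Fin m => (k : ℕ) + 1 ≤ (i : ℕ), ‖c i‖ ^ 2)
        = ∑ i, ‖c i‖ ^ 2 := by
      classical
      rw [Finset.sum_filter, Finset.sum_filter, Finset.sum_filter,
        ← Finset.sum_add_distrib, ← Finset.sum_add_distrib]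
      refine Finset.sum_congr rfl fun i _ => ?_
      rcases le_or_gt ((i : ℕ)) ((j : ℕ) - 1) with h1 | h1 <;>
        rcases le_or_gt ((k : ℕ) + 1) ((i : ℕ)) with h2 | h2
      · exfalso; omega
      · rw [if_neg (show ¬(j ≤ i ∧ i ≤ k) from by
            rw [not_and_or, Fin.le_def, Fin.le_def]; left; omega),
          if_pos h1, if_neg (show ¬((k:ℕ) + 1 ≤ (i:ℕ)) from by omega)]
        ring
      · rw [if_neg (show ¬(j ≤ i ∧ i ≤ k) from by
            rw [not_and_or, Fin.le_def, Fin.le_def]; right; omega),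
          if_neg (show ¬((i:ℕ) ≤ (j:ℕ) - 1) from by omega), if_pos h2]
        ring
      · rw [if_pos (show (j ≤ i ∧ i ≤ k) from by
            rw [Fin.le_def, Fin.le_def]; omega),
          if_neg (show ¬((i:ℕ) ≤ (j:ℕ) - 1) from by omega),
          if_neg (show ¬((k:ℕ) + 1 ≤ (i:ℕ)) from by omega)]
        ring
    linarith
end
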